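/- arXiv:1401.1657 — 4 statements merged into one kernel-verified Lean document; each statement's English description precedes it below -/
import Mathlib

section
/- Let D ⊆ ℂⁿ be a domain, f : 𝔻 → D holomorphic, and F : D → 𝔻 holomorphic such that F ∘ f is a Blaschke product of degree m. Then f is (m+1)-extremal: for any m+1 distinct points λ₁,…,λ_{m+1} ∈ 𝔻 there is no holomorphic map g defined on a neighborhood of the closed disc with values in D satisfying g(λⱼ) = f(λⱼ) for all j. -/
open Complex Metric Set

noncomputable section

/-- The open unit disc in `ℂ`. -/
def 𝔻 : Set ℂ := Metric.ball 0 1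

/-- `B` is a Blaschke product of degree `m` on the unit disc: a unimodular constant
times a product of `m` Möbius factors. -/
def IsBlaschke (m : ℕ) (B : ℂ → ℂ) : Prop :=
  ∃ (ω : ℂ) (a : Fin m → ℂ), ‖ω‖ = 1 ∧ (∀ j, a j ∈ 𝔻) ∧
    ∀ z ∈ 𝔻, B z = ω * ∏ j, (a j - z) / (1 - (starRingEnd ℂ) (a j) * z)

variable {E : Type*} [NormedAddCommGroup E] [NormedSpace ℂ E]

/-- The interpolation data `lam j ↦ f (lam j)` is extremally solvable (through `f`):
no map holomorphic on a neighbourhood of the closed unit disc with values in `D`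
interpolates `f` at the points `lam j`. -/
def ExtSolv (D : Set E) {m : ℕ} (lam : Fin m → ℂ) (f : ℂ → E) : Prop :=
  ¬ ∃ (U : Set ℂ) (g : ℂ → E), IsOpen U ∧ Metric.closedBall (0 : ℂ) 1 ⊆ U ∧
      DifferentiableOn ℂ g U ∧ (∀ z ∈ U, g z ∈ D) ∧ ∀ j, g (lam j) = f (lam j)

/-- `f : 𝔻 → D` is a weak `m`-extremal with respect to the distinct points `lam`. -/
def IsWeakExtremal (D : Set E) {m : ℕ} (lam : Fin m → ℂ) (f : ℂ → E) : Prop :=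
  DifferentiableOn ℂ f 𝔻 ∧ (∀ z ∈ 𝔻, f z ∈ D) ∧ ExtSolv D lam f

/-- `f : 𝔻 → D` is `m`-extremal: for all choices of `m` distinct points of `𝔻` the
corresponding interpolation data is extremally solvable. -/
def IsMExtremal (D : Set E) (m : ℕ) (f : ℂ → E) : Prop :=
  DifferentiableOn ℂ f 𝔻 ∧ (∀ z ∈ 𝔻, f z ∈ D) ∧
    ∀ lam : Fin m → ℂ, Function.Injective lam → (∀ j, lam j ∈ 𝔻) → ExtSolv D lam f

/-- The Minkowski functional of a set `D`. -/
def mink (D : Set E) (z : E) : ℝ := sInf {t : ℝ | 0 < t ∧ ((t : ℂ))⁻¹ • z ∈ D}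

/-- `φ` is a holomorphic automorphism of `D`. -/
def IsAutomorphismOf (D : Set E) (φ : E → E) : Prop :=
  DifferentiableOn ℂ φ D ∧ Set.MapsTo φ D D ∧
    ∃ ψ : E → E, DifferentiableOn ℂ ψ D ∧ Set.MapsTo ψ D D ∧
      (∀ z ∈ D, ψ (φ z) = z) ∧ (∀ z ∈ D, φ (ψ z) = z)

/-- The group of holomorphic automorphisms of `D` acts transitively. -/
def Homogeneous (D : Set E) : Prop :=
  ∀ z ∈ D, ∀ w ∈ D, ∃ φ : E → E, IsAutomorphismOf D φ ∧ φ z = w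

/-- `f` is an `m`-complex geodesic of `D`: there is `F ∈ 𝒪(D, 𝔻)` such that `F ∘ f` is a
non-constant Blaschke product of degree at most `m - 1`. -/
def IsComplexGeodesicOfOrder (D : Set E) (m : ℕ) (f : ℂ → E) : Prop :=
  DifferentiableOn ℂ f 𝔻 ∧ (∀ z ∈ 𝔻, f z ∈ D) ∧
    ∃ F : E → ℂ, DifferentiableOn ℂ F D ∧ (∀ z ∈ D, F z ∈ 𝔻) ∧
      ∃ k : ℕ, 1 ≤ k ∧ k ≤ m - 1 ∧ ∃ B : ℂ → ℂ, IsBlaschke k B ∧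
        ∀ z ∈ 𝔻, F (f z) = B z

/-- The sub-mean-value property on circles, for a real function on a subset of `ℂ`. -/
def SubmeanOn (u : ℂ → ℝ) (S : Set ℂ) : Prop :=
  ∀ (c : ℂ) (r : ℝ), 0 < r → Metric.closedBall c r ⊆ S →
    u c ≤ (2 * Real.pi)⁻¹ * ∫ θ in (0:ℝ)..(2 * Real.pi), u (c + r * Complex.exp (θ * Complex.I))

/-- `u` is plurisubharmonic on `D`: upper semicontinuous and submean on every complex line. -/
def PlurisubharmonicOn (u : E → ℝ) (D : Set E) : Prop :=
  UpperSemicontinuousOn u D ∧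
    ∀ (z v : E), SubmeanOn (fun w : ℂ => u (z + w • v)) {w : ℂ | z + w • v ∈ D}

/-- Hartogs pseudoconvexity: `- log dist(·, ∂D)` is plurisubharmonic on `D`. -/
def IsPseudoconvex (D : Set E) : Prop :=
  PlurisubharmonicOn (fun z => - Real.log (Metric.infDist z Dᶜ)) D


namespace BlaschkeAux

open Polynomial

/-- Basic norm identity for Möbius factors. -/
lemma norm_identity (a z : ℂ) :
    ‖1 - (starRingEnd ℂ) a * z‖ ^ 2 - ‖a - z‖ ^ 2 = (1 - ‖a‖ ^ 2) * (1 - ‖z‖ ^ 2) := by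
  have e : ∀ w : ℂ, ((‖w‖ ^ 2 : ℝ) : ℂ) = w * (starRingEnd ℂ) w := by
    intro w
    rw [Complex.mul_conj]
    norm_cast
    rw [← Complex.sq_norm]
  have key : ((‖1 - (starRingEnd ℂ) a * z‖ ^ 2 - ‖a - z‖ ^ 2 : ℝ) : ℂ)
      = (((1 - ‖a‖ ^ 2) * (1 - ‖z‖ ^ 2) : ℝ) : ℂ) := by
    simp only [Complex.ofReal_sub, Complex.ofReal_mul, Complex.ofReal_one, e]
    simp only [map_sub, map_mul, map_one, Complex.conj_conj]
    ring
  exact_mod_cast key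

lemma one_sub_conj_mul_ne_zero {a z : ℂ} (h : ‖a‖ * ‖z‖ < 1) :
    1 - (starRingEnd ℂ) a * z ≠ 0 := by
  intro h0
  have h1 : (starRingEnd ℂ) a * z = 1 := by
    have := sub_eq_zero.mp h0; linear_combination -this
  have h2 : ‖(starRingEnd ℂ) a * z‖ = 1 := by rw [h1, norm_one]
  rw [norm_mul, RCLike.norm_conj] at h2
  linarith [h.trans_eq h2.symm]

lemma one_sub_ne' {x y : ℂ} (hx : ‖x‖ < 1) (hy : ‖y‖ < 1) :
    1 - (starRingEnd ℂ) x * y ≠ 0 :=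
  one_sub_conj_mul_ne_zero (by nlinarith [norm_nonneg x, norm_nonneg y])

lemma norm_one_sub_conj_mul_le {a z : ℂ} (ha : ‖a‖ < 1) (hz : 1 ≤ ‖z‖) :
    ‖1 - (starRingEnd ℂ) a * z‖ ≤ ‖a - z‖ := by
  have h := norm_identity a z
  have h1 : 0 ≤ (1 - ‖a‖ ^ 2) * (‖z‖ ^ 2 - 1) :=
    mul_nonneg (by nlinarith [norm_nonneg a]) (by nlinarith)
  have hsq : ‖1 - (starRingEnd ℂ) a * z‖ ^ 2 ≤ ‖a - z‖ ^ 2 := by nlinarith [h1]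
  exact (pow_le_pow_iff_left₀ (norm_nonneg _) (norm_nonneg _) two_ne_zero).mp hsq

lemma norm_sub_lt_norm_one_sub {a z : ℂ} (ha : ‖a‖ < 1) (hz : ‖z‖ < 1) :
    ‖a - z‖ < ‖1 - (starRingEnd ℂ) a * z‖ := by
  have h := norm_identity a z
  have h1 : 0 < (1 - ‖a‖ ^ 2) * (1 - ‖z‖ ^ 2) :=
    mul_pos (by nlinarith [norm_nonneg a]) (by nlinarith [norm_nonneg z])
  have hsq : ‖a - z‖ ^ 2 < ‖1 - (starRingEnd ℂ) a * z‖ ^ 2 := by nlinarith [h1]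
  by_contra hc
  push_neg at hc
  exact absurd (pow_le_pow_left₀ (norm_nonneg _) hc 2) (not_le.mpr hsq)

lemma mobius_lt_one {a w : ℂ} (ha : ‖a‖ < 1) (hw : ‖w‖ < 1) :
    ‖(a - w) / (1 - (starRingEnd ℂ) a * w)‖ < 1 := by
  have hne : 1 - (starRingEnd ℂ) a * w ≠ 0 :=
    one_sub_conj_mul_ne_zero (by nlinarith [norm_nonneg a, norm_nonneg w])
  rw [norm_div, div_lt_one (norm_pos_iff.mpr hne)]
  exact norm_sub_lt_norm_one_sub ha hw


/-! ### Multiset product helpers -/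

lemma msProd_nonneg (s : Multiset ℂ) (f : ℂ → ℝ) :
    (∀ x ∈ s, 0 ≤ f x) → 0 ≤ (s.map f).prod := by
  induction s using Multiset.induction_on with
  | empty => intro _; simp
  | cons y t ih =>
    intro h
    simp only [Multiset.map_cons, Multiset.prod_cons]
    exact mul_nonneg (h y (Multiset.mem_cons_self y t))
      (ih fun x hx => h x (Multiset.mem_cons_of_mem hx))

lemma msProd_le (s : Multiset ℂ) (f g : ℂ → ℝ) :
    (∀ x ∈ s, 0 ≤ f x) → (∀ x ∈ s, f x ≤ g x) →
    (s.map f).prod ≤ (s.map g).prod := by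
  induction s using Multiset.induction_on with
  | empty => intro _ _; simp
  | cons y t ih =>
    intro h0 hle
    simp only [Multiset.map_cons, Multiset.prod_cons]
    refine mul_le_mul (hle y (Multiset.mem_cons_self y t))
      (ih (fun x hx => h0 x (Multiset.mem_cons_of_mem hx))
        (fun x hx => hle x (Multiset.mem_cons_of_mem hx)))
      (msProd_nonneg t f fun x hx => h0 x (Multiset.mem_cons_of_mem hx))
      (le_trans (h0 y (Multiset.mem_cons_self y t)) (hle y (Multiset.mem_cons_self y t)))

lemma msProd_norm (s : Multiset ℂ) (f : ℂ → ℂ) :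
    ‖(s.map f).prod‖ = (s.map fun x => ‖f x‖).prod := by
  induction s using Multiset.induction_on with
  | empty => simp
  | cons y t ih => simp [Multiset.map_cons, Multiset.prod_cons, norm_mul, ih]

lemma msProd_div (s : Multiset ℂ) (f g : ℂ → ℂ) :
    (s.map fun x => f x / g x).prod = (s.map f).prod / (s.map g).prod := by
  induction s using Multiset.induction_on with
  | empty => simp
  | cons y t ih =>
    simp only [Multiset.map_cons, Multiset.prod_cons, ih]
    rw [div_mul_div_comm]

lemma msProd_neg (s : Multiset ℂ) (f : ℂ → ℂ) :
    (s.map fun x => -f x).prod = (-1) ^ Multiset.card s * (s.map f).prod := by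
  induction s using Multiset.induction_on with
  | empty => simp
  | cons y t ih =>
    simp only [Multiset.map_cons, Multiset.prod_cons, ih, Multiset.card_cons, pow_succ]
    ring

lemma msProd_mul_const (s : Multiset ℂ) (f : ℂ → ℂ) (z : ℂ) :
    (s.map fun x => z * f x).prod = z ^ Multiset.card s * (s.map f).prod := by
  induction s using Multiset.induction_on with
  | empty => simp
  | cons y t ih =>
    simp only [Multiset.map_cons, Multiset.prod_cons, ih, Multiset.card_cons, pow_succ]
    ring

lemma msProd_ne_zero (s : Multiset ℂ) (f : ℂ → ℂ) (h : ∀ x ∈ s, f x ≠ 0) :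
    (s.map f).prod ≠ 0 := by
  apply Multiset.prod_ne_zero
  intro h0
  rw [Multiset.mem_map] at h0
  obtain ⟨x, hx, hfx⟩ := h0
  exact h x hx hfx

lemma msProd_continuous (s : Multiset ℂ) (f : ℂ → ℂ → ℂ) :
    (∀ x ∈ s, Continuous (f x)) → Continuous fun z => (s.map fun x => f x z).prod := by
  induction s using Multiset.induction_on with
  | empty => intro _; simpa using continuous_const
  | cons y t ih =>
    intro h
    simp only [Multiset.map_cons, Multiset.prod_cons]
    exact (h y (Multiset.mem_cons_self y t)).mul
      (ih fun x hx => h x (Multiset.mem_cons_of_mem hx))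

/-! ### The numerator/denominator of a Blaschke product -/

/-- `Pf a z = ∏ (x - z)`. -/
def Pf (a : Multiset ℂ) (z : ℂ) : ℂ := (a.map fun x => x - z).prod

/-- `Qf a z = ∏ (1 - conj x * z)`. -/
def Qf (a : Multiset ℂ) (z : ℂ) : ℂ := (a.map fun x => 1 - (starRingEnd ℂ) x * z).prod

lemma Qf_ne_zero {a : Multiset ℂ} (ha : ∀ x ∈ a, ‖x‖ < 1) {z : ℂ} (hz : ‖z‖ ≤ 1) :
    Qf a z ≠ 0 := by
  refine msProd_ne_zero _ _ fun x hx => one_sub_conj_mul_ne_zero ?_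
  calc ‖x‖ * ‖z‖ ≤ ‖x‖ * 1 := mul_le_mul_of_nonneg_left hz (norm_nonneg x)
    _ = ‖x‖ := mul_one _
    _ < 1 := ha x hx

lemma norm_Qf_le_Pf {a : Multiset ℂ} (ha : ∀ x ∈ a, ‖x‖ < 1) {z : ℂ} (hz : 1 ≤ ‖z‖) :
    ‖Qf a z‖ ≤ ‖Pf a z‖ := by
  rw [Qf, Pf, msProd_norm, msProd_norm]
  exact msProd_le _ _ _ (fun x _ => norm_nonneg _)
    (fun x hx => norm_one_sub_conj_mul_le (ha x hx) hz)

lemma norm_Pf_eq_Qf_of_unit {a : Multiset ℂ} {z : ℂ} (hz : ‖z‖ = 1) :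
    ‖Pf a z‖ = ‖Qf a z‖ := by
  rw [Qf, Pf, msProd_norm, msProd_norm]
  congr 1
  apply Multiset.map_congr rfl
  intro x _
  have : 1 - (starRingEnd ℂ) x * z = z * ((starRingEnd ℂ) z - (starRingEnd ℂ) x) := by
    have hns : Complex.normSq z = 1 := by
      rw [← Complex.sq_norm, hz, one_pow]
    have hz1 : z * (starRingEnd ℂ) z = 1 := by
      rw [Complex.mul_conj, hns, Complex.ofReal_one]
    linear_combination -hz1
  rw [this, norm_mul, hz, one_mul,
    show (starRingEnd ℂ) z - (starRingEnd ℂ) x = (starRingEnd ℂ) (z - x) by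
      simp [map_sub],
    RCLike.norm_conj, norm_sub_rev]


/-! ### The polynomial `α Q - ω P` -/

/-- The polynomial whose evaluation is `α * Qf a z - ω * Pf a z`. -/
def Npoly (α ω : ℂ) (a : Multiset ℂ) : Polynomial ℂ :=
  Polynomial.C α * (a.map fun x => 1 - Polynomial.C ((starRingEnd ℂ) x) * Polynomial.X).prod -
    Polynomial.C ω * (a.map fun x => Polynomial.C x - Polynomial.X).prod

lemma Npoly_eval (α ω : ℂ) (a : Multiset ℂ) (z : ℂ) :
    (Npoly α ω a).eval z = α * Qf a z - ω * Pf a z := by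
  simp [Npoly, Qf, Pf, eval_multiset_prod, Multiset.map_map, Function.comp]

lemma Npoly_natDegree_le (α ω : ℂ) (a : Multiset ℂ) :
    (Npoly α ω a).natDegree ≤ Multiset.card a := by
  have hbound : ∀ (f : ℂ → Polynomial ℂ), (∀ x ∈ a, (f x).natDegree ≤ 1) →
      ((a.map f).prod).natDegree ≤ Multiset.card a := by
    intro f hf
    refine le_trans (natDegree_multiset_prod_le _) ?_
    refine le_trans (Multiset.sum_le_card_nsmul _ 1 ?_) ?_
    · intro x hx
      rw [Multiset.mem_map] at hx
      obtain ⟨y, hy, rfl⟩ := hx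
      rw [Multiset.mem_map] at hy
      obtain ⟨w, hw, rfl⟩ := hy
      exact hf w hw
    · simp [Multiset.card_map]
  refine le_trans (natDegree_sub_le _ _) (max_le ?_ ?_)
  · refine le_trans (natDegree_C_mul_le _ _) (hbound _ fun x _ => ?_)
    refine le_trans (natDegree_sub_le _ _) (max_le (by simp) ?_)
    exact le_trans (natDegree_C_mul_le _ _) natDegree_X_le
  · refine le_trans (natDegree_C_mul_le _ _) (hbound _ fun x _ => ?_)
    refine le_trans (natDegree_sub_le _ _) (max_le (by simp) natDegree_X_le)


set_option maxHeartbeats 1000000 in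
/-- Reflection identity: extend `z^{k+1} conj(N(1/conj z))` computation to all of `ℂ`. -/
lemma reflect_iden (a R : Multiset ℂ) (α ω c : ℂ) (k d : ℕ)
    (hcard : Multiset.card a = k + 1) (hcardR : Multiset.card R = d) (hdegle : d ≤ k + 1)
    (hNeval : ∀ z : ℂ, α * Qf a z - ω * Pf a z = c * (R.map fun r => z - r).prod) :
    ∀ z : ℂ, (-1 : ℂ) ^ k * ((starRingEnd ℂ) ω * Qf a z - (starRingEnd ℂ) α * Pf a z) =
      (starRingEnd ℂ) c * (z ^ (k + 1 - d) *
        (R.map fun r => 1 - (starRingEnd ℂ) r * z).prod) := by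
  have hpre : ∀ z : ℂ, z ≠ 0 →
      (-1 : ℂ) ^ k * ((starRingEnd ℂ) ω * Qf a z - (starRingEnd ℂ) α * Pf a z) =
        (starRingEnd ℂ) c * (z ^ (k + 1 - d) *
          (R.map fun r => 1 - (starRingEnd ℂ) r * z).prod) := by
    intro z hz
    set w := ((starRingEnd ℂ) z)⁻¹ with hw
    have hcw : (starRingEnd ℂ) w = z⁻¹ := by rw [hw, map_inv₀, Complex.conj_conj]
    have hQw : (starRingEnd ℂ) (Qf a w) = (a.map fun x => 1 - x * z⁻¹).prod := by
      rw [Qf, map_multiset_prod, Multiset.map_map]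
      apply congrArg
      apply Multiset.map_congr rfl
      intro x _
      simp only [Function.comp_apply, map_sub, map_mul, map_one, Complex.conj_conj, hcw]
    have hPw : (starRingEnd ℂ) (Pf a w) = (a.map fun x => (starRingEnd ℂ) x - z⁻¹).prod := by
      rw [Pf, map_multiset_prod, Multiset.map_map]
      apply congrArg
      apply Multiset.map_congr rfl
      intro x _
      simp only [Function.comp_apply, map_sub, hcw]
    have hzpowQ : z ^ (k + 1) * (a.map fun x => 1 - x * z⁻¹).prod
        = (-1 : ℂ) ^ (k + 1) * Pf a z := by
      calc z ^ (k + 1) * (a.map fun x => 1 - x * z⁻¹).prod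
          = z ^ Multiset.card a * (a.map fun x => 1 - x * z⁻¹).prod := by rw [hcard]
        _ = (a.map fun x => z * (1 - x * z⁻¹)).prod := (msProd_mul_const _ _ _).symm
        _ = (a.map fun x => -(x - z)).prod := by
            apply congrArg; apply Multiset.map_congr rfl; intro x _
            field_simp
            ring
        _ = (-1 : ℂ) ^ Multiset.card a * (a.map fun x => x - z).prod := msProd_neg _ _
        _ = (-1 : ℂ) ^ (k + 1) * Pf a z := by rw [hcard, Pf]
    have hzpowP : z ^ (k + 1) * (a.map fun x => (starRingEnd ℂ) x - z⁻¹).prod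
        = (-1 : ℂ) ^ (k + 1) * Qf a z := by
      calc z ^ (k + 1) * (a.map fun x => (starRingEnd ℂ) x - z⁻¹).prod
          = z ^ Multiset.card a * (a.map fun x => (starRingEnd ℂ) x - z⁻¹).prod := by
            rw [hcard]
        _ = (a.map fun x => z * ((starRingEnd ℂ) x - z⁻¹)).prod := (msProd_mul_const _ _ _).symm
        _ = (a.map fun x => -(1 - (starRingEnd ℂ) x * z)).prod := by
            apply congrArg; apply Multiset.map_congr rfl; intro x _
            field_simp
            ring
        _ = (-1 : ℂ) ^ Multiset.card a * (a.map fun x => 1 - (starRingEnd ℂ) x * z).prod :=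
            msProd_neg _ _
        _ = (-1 : ℂ) ^ (k + 1) * Qf a z := by rw [hcard, Qf]
    have hconjNw : (starRingEnd ℂ) (α * Qf a w - ω * Pf a w)
        = (starRingEnd ℂ) c * (R.map fun r => z⁻¹ - (starRingEnd ℂ) r).prod := by
      rw [hNeval w, map_mul, map_multiset_prod, Multiset.map_map]
      congr 1
      apply congrArg
      apply Multiset.map_congr rfl
      intro r _
      simp only [Function.comp_apply, map_sub, hcw]
    have hzpowR : z ^ (k + 1) * (R.map fun r => z⁻¹ - (starRingEnd ℂ) r).prod
        = z ^ (k + 1 - d) * (R.map fun r => 1 - (starRingEnd ℂ) r * z).prod := by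
      have hstep : z ^ (k + 1) * (R.map fun r => z⁻¹ - (starRingEnd ℂ) r).prod
          = z ^ (k + 1 - d) * (z ^ d * (R.map fun r => z⁻¹ - (starRingEnd ℂ) r).prod) := by
        rw [← mul_assoc, ← pow_add, Nat.sub_add_cancel hdegle]
      rw [hstep]
      congr 1
      calc z ^ d * (R.map fun r => z⁻¹ - (starRingEnd ℂ) r).prod
          = z ^ Multiset.card R * (R.map fun r => z⁻¹ - (starRingEnd ℂ) r).prod := by
            rw [hcardR]
        _ = (R.map fun r => z * (z⁻¹ - (starRingEnd ℂ) r)).prod := (msProd_mul_const _ _ _).symm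
        _ = (R.map fun r => 1 - (starRingEnd ℂ) r * z).prod := by
            apply congrArg; apply Multiset.map_congr rfl; intro r _
            field_simp
    calc (-1 : ℂ) ^ k * ((starRingEnd ℂ) ω * Qf a z - (starRingEnd ℂ) α * Pf a z)
        = (starRingEnd ℂ) α * ((-1 : ℂ) ^ (k + 1) * Pf a z)
            - (starRingEnd ℂ) ω * ((-1 : ℂ) ^ (k + 1) * Qf a z) := by
          rw [pow_succ]; ring
      _ = (starRingEnd ℂ) α * (z ^ (k + 1) * (a.map fun x => 1 - x * z⁻¹).prod)
            - (starRingEnd ℂ) ω *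
              (z ^ (k + 1) * (a.map fun x => (starRingEnd ℂ) x - z⁻¹).prod) := by
          rw [hzpowQ, hzpowP]
      _ = z ^ (k + 1) * ((starRingEnd ℂ) α * (a.map fun x => 1 - x * z⁻¹).prod
            - (starRingEnd ℂ) ω * (a.map fun x => (starRingEnd ℂ) x - z⁻¹).prod) := by
          ring
      _ = z ^ (k + 1) * (starRingEnd ℂ) (α * Qf a w - ω * Pf a w) := by
          rw [map_sub, map_mul, map_mul, hQw, hPw]
      _ = z ^ (k + 1) * ((starRingEnd ℂ) c * (R.map fun r => z⁻¹ - (starRingEnd ℂ) r).prod) := by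
          rw [hconjNw]
      _ = (starRingEnd ℂ) c * (z ^ (k + 1) * (R.map fun r => z⁻¹ - (starRingEnd ℂ) r).prod) := by
          ring
      _ = (starRingEnd ℂ) c * (z ^ (k + 1 - d) *
            (R.map fun r => 1 - (starRingEnd ℂ) r * z).prod) := by
          rw [hzpowR]
  have hcont1 : Continuous fun z : ℂ =>
      (-1 : ℂ) ^ k * ((starRingEnd ℂ) ω * Qf a z - (starRingEnd ℂ) α * Pf a z) := by
    apply continuous_const.mul
    apply Continuous.sub
    · exact continuous_const.mul
        (msProd_continuous a (fun x z => 1 - (starRingEnd ℂ) x * z)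
          (fun x _ => continuous_const.sub (continuous_const.mul continuous_id)))
    · exact continuous_const.mul
        (msProd_continuous a (fun x z => x - z)
          (fun x _ => continuous_const.sub continuous_id))
  have hcont2 : Continuous fun z : ℂ =>
      (starRingEnd ℂ) c * (z ^ (k + 1 - d) *
        (R.map fun r => 1 - (starRingEnd ℂ) r * z).prod) := by
    apply continuous_const.mul
    exact (continuous_pow _).mul
      (msProd_continuous R (fun r z => 1 - (starRingEnd ℂ) r * z)
        (fun r _ => continuous_const.sub (continuous_const.mul continuous_id)))
  have hdense : Dense ({(0 : ℂ)}ᶜ : Set ℂ) := dense_compl_singleton 0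
  have heq := Continuous.ext_on hdense hcont1 hcont2 (fun z hz => hpre z hz)
  exact fun z => congrFun heq z

/-- Roots of `α Q - ω P` lie in the unit disc. -/
lemma root_norm_lt_one {a : Multiset ℂ} (ha : ∀ x ∈ a, ‖x‖ < 1) {α ω : ℂ}
    (hω : ‖ω‖ = 1) (hα : ‖α‖ < 1) {r : ℂ}
    (hr0 : α * Qf a r - ω * Pf a r = 0) : ‖r‖ < 1 := by
  have hωne : ω ≠ 0 := by intro h0; rw [h0, norm_zero] at hω; norm_num at hω
  by_contra hge
  push_neg at hge
  rcases eq_or_ne (Qf a r) 0 with hQ0 | hQ0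
  · have hP0 : Pf a r = 0 := by
      have h2 : ω * Pf a r = 0 := by linear_combination -hr0 + α * hQ0
      exact (mul_eq_zero.mp h2).resolve_left hωne
    rw [Pf] at hP0
    have h3 := Multiset.prod_eq_zero_iff.mp hP0
    rw [Multiset.mem_map] at h3
    obtain ⟨x, hx, hx0⟩ := h3
    have hxr : x = r := by linear_combination hx0
    rw [← hxr] at hge
    exact absurd (ha x hx) (not_lt.mpr hge)
  · have hle := norm_Qf_le_Pf ha hge
    have h4 : ‖α‖ * ‖Qf a r‖ = ‖Pf a r‖ := by
      have h5 : α * Qf a r = ω * Pf a r := by linear_combination hr0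
      calc ‖α‖ * ‖Qf a r‖ = ‖α * Qf a r‖ := (norm_mul _ _).symm
        _ = ‖ω * Pf a r‖ := by rw [h5]
        _ = ‖Pf a r‖ := by rw [norm_mul, hω, one_mul]
    have h6 : 0 < ‖Qf a r‖ := norm_pos_iff.mpr hQ0
    nlinarith

/-- The polynomial `α Q - ω P` is nonzero when `‖α‖ < 1 = ‖ω‖`. -/
lemma Npoly_ne_zero {a : Multiset ℂ} (ha : ∀ x ∈ a, ‖x‖ < 1) {α ω : ℂ}
    (hω : ‖ω‖ = 1) (hα : ‖α‖ < 1) : Npoly α ω a ≠ 0 := by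
  intro h0
  have he := Npoly_eval α ω a 1
  rw [h0] at he
  simp only [Polynomial.eval_zero] at he
  have h4 : α * Qf a 1 = ω * Pf a 1 := by linear_combination -he
  have h3 : Qf a 1 ≠ 0 := Qf_ne_zero ha (by norm_num)
  have h5 : ‖α * Qf a 1‖ = ‖α‖ * ‖Qf a 1‖ := norm_mul _ _
  rw [h4, norm_mul, hω, one_mul, norm_Pf_eq_Qf_of_unit (by norm_num)] at h5
  have h6 : 0 < ‖Qf a 1‖ := norm_pos_iff.mpr h3
  nlinarith

/-- From the reflection identity evaluated at `0`, the degree is full. -/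
lemma degree_full {a R : Multiset ℂ} {α ω c : ℂ} {k d : ℕ}
    (ha : ∀ x ∈ a, ‖x‖ < 1) (hω : ‖ω‖ = 1) (hα : ‖α‖ < 1) (hdegle : d ≤ k + 1)
    (hIdenAll : ∀ z : ℂ,
      (-1 : ℂ) ^ k * ((starRingEnd ℂ) ω * Qf a z - (starRingEnd ℂ) α * Pf a z) =
        (starRingEnd ℂ) c * (z ^ (k + 1 - d) *
          (R.map fun r => 1 - (starRingEnd ℂ) r * z).prod)) :
    d = k + 1 := by
  have hδne : ((-1 : ℂ) ^ k) ≠ 0 := pow_ne_zero _ (by norm_num)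
  have hQ0 : Qf a (0 : ℂ) = 1 := by simp [Qf]
  have hP0 : Pf a (0 : ℂ) = a.prod := by simp [Pf]
  have haprod : ‖a.prod‖ ≤ 1 := by
    have h4 : a.prod = (a.map fun x => x).prod := by rw [Multiset.map_id']
    rw [h4, msProd_norm]
    calc (a.map fun x => ‖x‖).prod ≤ (a.map fun _ => (1 : ℝ)).prod :=
        msProd_le _ _ _ (fun x _ => norm_nonneg x) (fun x hx => (ha x hx).le)
      _ = 1 := by simp
  by_contra hne
  have hlt : k + 1 - d ≠ 0 := by omega
  have h0 := hIdenAll 0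
  rw [hQ0, hP0, zero_pow hlt, zero_mul, mul_zero] at h0
  have h1 : (starRingEnd ℂ) ω - (starRingEnd ℂ) α * a.prod = 0 := by
    rcases mul_eq_zero.mp h0 with h2 | h2
    · exact absurd h2 hδne
    · linear_combination h2
  rw [sub_eq_zero] at h1
  have h2 : ‖(starRingEnd ℂ) α * a.prod‖ < 1 := by
    rw [norm_mul, RCLike.norm_conj]
    calc ‖α‖ * ‖a.prod‖ ≤ ‖α‖ * 1 := mul_le_mul_of_nonneg_left haprod (norm_nonneg α)
      _ = ‖α‖ := mul_one _
      _ < 1 := hα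
  have h3 : ‖(starRingEnd ℂ) ω‖ = 1 := by rw [RCLike.norm_conj, hω]
  rw [h1] at h3
  linarith

/-- The key scalar computation at an interpolation point. -/
lemma scalar_value {α ω c δ l0 z hz A B P Q : ℂ}
    (hω2 : ω * (starRingEnd ℂ) ω = 1) (hδ2 : δ * δ = 1)
    (hωne : ω ≠ 0) (hδne : δ ≠ 0) (hcc : (starRingEnd ℂ) c ≠ 0)
    (hQ : Q ≠ 0) (hB : B ≠ 0) (h1l0 : 1 - (starRingEnd ℂ) l0 * z ≠ 0)
    (hlz : l0 - z ≠ 0) (hMden : 1 - (starRingEnd ℂ) α * hz ≠ 0)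
    (hhz : hz * Q = ω * P)
    (hN : α * Q - ω * P = c * ((z - l0) * (δ * A)))
    (hIdenz : δ * ((starRingEnd ℂ) ω * Q - (starRingEnd ℂ) α * P) =
      (starRingEnd ℂ) c * ((1 - (starRingEnd ℂ) l0 * z) * B)) :
    (α - hz) / (1 - (starRingEnd ℂ) α * hz) * ((1 - (starRingEnd ℂ) l0 * z) / (l0 - z)) =
      -(c * (starRingEnd ℂ) ω) / (starRingEnd ℂ) c * (A / B) := by
  have hDz : Q - (starRingEnd ℂ) α * ω * P =
      ω * δ * ((starRingEnd ℂ) c * ((1 - (starRingEnd ℂ) l0 * z) * B)) := by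
    linear_combination (ω * δ) * hIdenz +
      ((starRingEnd ℂ) α * ω * P - Q * (ω * (starRingEnd ℂ) ω)) * hδ2 + (-Q) * hω2
  have hDne : Q - (starRingEnd ℂ) α * ω * P ≠ 0 := by
    rw [hDz]
    exact mul_ne_zero (mul_ne_zero hωne hδne) (mul_ne_zero hcc (mul_ne_zero h1l0 hB))
  have hMob : (α - hz) / (1 - (starRingEnd ℂ) α * hz)
      = (α * Q - ω * P) / (Q - (starRingEnd ℂ) α * ω * P) := by
    rw [div_eq_div_iff hMden hDne]
    linear_combination (α * (starRingEnd ℂ) α - 1) * hhz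
  rw [hMob, hN, hDz]
  rw [div_mul_div_comm, div_mul_div_comm]
  rw [div_eq_div_iff
    (mul_ne_zero (mul_ne_zero (mul_ne_zero hωne hδne)
      (mul_ne_zero hcc (mul_ne_zero h1l0 hB))) hlz)
    (mul_ne_zero hcc hB)]
  linear_combination (-(c * δ * A * (starRingEnd ℂ) c * B *
    (1 - (starRingEnd ℂ) l0 * z) * (z - l0))) * hω2

/-- The boundary bound for the Schur reduction. -/
lemma sphere_bound {h hf : ℂ → ℂ} {α l0 : ℂ} {ρ : ℝ} {U : Set ℂ} (hρ1 : 1 < ρ)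
    (hα : ‖α‖ < 1) (hl0 : ‖l0‖ < 1)
    (hval : ∀ z ∈ U, ‖h z‖ < 1)
    (hsub : ∀ w : ℂ, ‖w‖ = ρ → w ∈ U)
    (hfval : ∀ w : ℂ, w ≠ l0 → hf w = (α - h w) / (1 - (starRingEnd ℂ) α * h w) *
      ((1 - (starRingEnd ℂ) l0 * w) / (l0 - w))) :
    ∀ w ∈ Metric.sphere (0 : ℂ) ρ, ‖hf w‖ < 1 := by
  intro w hwmem
  have hwnorm : ‖w‖ = ρ := by rwa [mem_sphere_zero_iff_norm] at hwmem
  have hw1 : 1 ≤ ‖w‖ := le_of_le_of_eq hρ1.le hwnorm.symm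
  have hwU : w ∈ U := hsub w hwnorm
  have hwne : w ≠ l0 := by
    intro he
    rw [he] at hwnorm
    rw [hwnorm] at hl0
    exact absurd hl0 (not_lt.mpr hρ1.le)
  rw [hfval w hwne, norm_mul]
  have hM : ‖(α - h w) / (1 - (starRingEnd ℂ) α * h w)‖ < 1 :=
    mobius_lt_one hα (hval w hwU)
  have hT : ‖(1 - (starRingEnd ℂ) l0 * w) / (l0 - w)‖ ≤ 1 := by
    rw [norm_div]
    exact div_le_one_of_le₀ (norm_one_sub_conj_mul_le hl0 hw1) (norm_nonneg _)
  calc ‖(α - h w) / (1 - (starRingEnd ℂ) α * h w)‖ *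
        ‖(1 - (starRingEnd ℂ) l0 * w) / (l0 - w)‖
      ≤ ‖(α - h w) / (1 - (starRingEnd ℂ) α * h w)‖ * 1 :=
        mul_le_mul_of_nonneg_left hT (norm_nonneg _)
    _ = ‖(α - h w) / (1 - (starRingEnd ℂ) α * h w)‖ := mul_one _
    _ < 1 := hM

/-- Maximum modulus step: a bound on the sphere propagates inside the ball. -/
lemma maxmod_ball {h1 : ℂ → ℂ} {ρ ρ₂ : ℝ} (hρpos : 0 < ρ) (hρρ₂ : ρ < ρ₂)
    (hh1diff : DifferentiableOn ℂ h1 (Metric.ball (0 : ℂ) ρ₂))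
    (hsphere : ∀ w ∈ Metric.sphere (0 : ℂ) ρ, ‖h1 w‖ < 1) :
    ∀ w ∈ Metric.ball (0 : ℂ) ρ, ‖h1 w‖ < 1 := by
  obtain ⟨x0, hx0mem, hx0max⟩ := (isCompact_sphere (0 : ℂ) ρ).exists_isMaxOn
    (NormedSpace.sphere_nonempty.mpr hρpos.le)
    (continuous_norm.comp_continuousOn (hh1diff.continuousOn.mono
      (fun w hw => by
        rw [mem_sphere_zero_iff_norm] at hw
        rw [mem_ball_zero_iff, hw]
        exact hρρ₂)))
  have hcl : closure (Metric.ball (0 : ℂ) ρ) = Metric.closedBall 0 ρ :=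
    closure_ball 0 hρpos.ne'
  intro w hw
  have hle : ‖h1 w‖ ≤ ‖h1 x0‖ := by
    refine Complex.norm_le_of_forall_mem_frontier_norm_le (U := Metric.ball (0 : ℂ) ρ) isBounded_ball ?_ ?_ ?_
    · refine DifferentiableOn.diffContOnCl ?_
      rw [hcl]
      exact hh1diff.mono (Metric.closedBall_subset_ball hρρ₂)
    · intro y hy
      rw [frontier_ball 0 hρpos.ne'] at hy
      exact hx0max hy
    · exact subset_closure hw
  exact lt_of_le_of_lt hle (hsphere x0 hx0mem)




set_option maxHeartbeats 2000000 in
lemma blaschke_key : ∀ (m : ℕ) (ω : ℂ) (a : Multiset ℂ), ‖ω‖ = 1 → Multiset.card a = m →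
    (∀ x ∈ a, ‖x‖ < 1) →
    ∀ lam : Fin (m + 1) → ℂ, Function.Injective lam → (∀ j, ‖lam j‖ < 1) →
    ∀ (U : Set ℂ) (h : ℂ → ℂ), IsOpen U → Metric.closedBall (0 : ℂ) 1 ⊆ U →
      DifferentiableOn ℂ h U → (∀ z ∈ U, ‖h z‖ < 1) →
      (∀ j, h (lam j) =
        ω * (a.map fun x => (x - lam j) / (1 - (starRingEnd ℂ) x * lam j)).prod) →
      False := by
  intro m
  induction m with
  | zero =>
    intro ω a hω hcard ha lam hinj hlam U h hUo hUsub hdiff hval hint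
    have h0 : h (lam 0) = ω := by
      have h1 := hint 0
      rw [Multiset.card_eq_zero.mp hcard] at h1
      simpa using h1
    have hmem : lam 0 ∈ U := hUsub (by
      simpa [Metric.mem_closedBall, dist_zero_right] using (hlam 0).le)
    have h2 := hval _ hmem
    rw [h0, hω] at h2
    exact lt_irrefl 1 h2
  | succ k IH =>
    intro ω a hω hcard ha lam hinj hlam U h hUo hUsub hdiff hval hint
    have hωne : ω ≠ 0 := by
      intro h0; rw [h0, norm_zero] at hω; norm_num at hω
    have hmemU : ∀ z : ℂ, ‖z‖ ≤ 1 → z ∈ U := fun z hz =>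
      hUsub (by simpa [Metric.mem_closedBall, dist_zero_right] using hz)
    set l0 := lam 0 with hl0def
    have hl0 : ‖l0‖ < 1 := hlam 0
    set α := h l0 with hαdef
    have hα : ‖α‖ < 1 := hval _ (hmemU _ hl0.le)
    have hQl0 : Qf a l0 ≠ 0 := Qf_ne_zero ha hl0.le
    have hαQ : α * Qf a l0 - ω * Pf a l0 = 0 := by
      have h1 : α = ω * (Pf a l0 / Qf a l0) := by
        have h2 := hint 0
        rw [msProd_div] at h2
        exact h2
      rw [mul_div_assoc'] at h1
      rw [eq_div_iff hQl0] at h1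
      linear_combination h1
    -- the polynomial and its roots
    have hNpne : Npoly α ω a ≠ 0 := Npoly_ne_zero ha hω hα
    set c := (Npoly α ω a).leadingCoeff with hcdef
    have hc : c ≠ 0 := Polynomial.leadingCoeff_ne_zero.mpr hNpne
    have hcc : (starRingEnd ℂ) c ≠ 0 := by simpa using hc
    have hsplit : (Npoly α ω a).Splits :=
      IsAlgClosed.splits (Npoly α ω a)
    set R := (Npoly α ω a).roots with hRdef
    have hfact : Npoly α ω a =
        Polynomial.C c * (R.map fun r => Polynomial.X - Polynomial.C r).prod :=
      hsplit.eq_prod_roots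
    have hcardR : Multiset.card R = (Npoly α ω a).natDegree :=
      (Polynomial.splits_iff_card_roots).mp hsplit
    have hdegle : (Npoly α ω a).natDegree ≤ k + 1 :=
      le_trans (Npoly_natDegree_le α ω a) (le_of_eq hcard)
    set d := (Npoly α ω a).natDegree with hddef
    have hNeval : ∀ z : ℂ, α * Qf a z - ω * Pf a z = c * (R.map fun r => z - r).prod := by
      intro z
      have h1 : (Npoly α ω a).eval z = c * (R.map fun r => z - r).prod := by
        conv_lhs => rw [hfact]
        rw [Polynomial.eval_mul, Polynomial.eval_C, Polynomial.eval_multiset_prod,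
          Multiset.map_map]
        congr 2
        apply Multiset.map_congr rfl
        intro r _
        simp
      exact (Npoly_eval α ω a z).symm.trans h1
    have hroot : ∀ r ∈ R, ‖r‖ < 1 := by
      intro r hr
      refine root_norm_lt_one ha hω hα ?_
      have h1 := (Polynomial.mem_roots hNpne).mp hr
      rw [Polynomial.IsRoot.def] at h1
      rw [← Npoly_eval α ω a r]
      exact h1
    have hl0R : l0 ∈ R := by
      rw [hRdef, Polynomial.mem_roots hNpne, Polynomial.IsRoot.def, Npoly_eval]
      exact hαQ
    set R' := R.erase l0 with hR'def
    have hRcons : R = l0 ::ₘ R' := (Multiset.cons_erase hl0R).symm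
    have hrootR' : ∀ x ∈ R', ‖x‖ < 1 := fun x hx =>
      hroot x (Multiset.mem_of_mem_erase hx)
    set δ : ℂ := (-1 : ℂ) ^ k with hδdef
    have hδ2 : δ * δ = 1 := by rw [hδdef, ← mul_pow]; norm_num
    have hδne : δ ≠ 0 := by rw [hδdef]; exact pow_ne_zero _ (by norm_num)
    have hIdenAll := reflect_iden a R α ω c k d hcard hcardR hdegle hNeval
    have hd1 : d = k + 1 := degree_full ha hω hα hdegle hIdenAll
    have hIden : ∀ z : ℂ,
        δ * ((starRingEnd ℂ) ω * Qf a z - (starRingEnd ℂ) α * Pf a z) =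
          (starRingEnd ℂ) c * (R.map fun r => 1 - (starRingEnd ℂ) r * z).prod := by
      intro z
      have h1 := hIdenAll z
      rw [hd1] at h1
      rw [hδdef]
      simpa [Nat.sub_self] using h1
    have hcardR' : Multiset.card R' = k := by
      have h1 := hcardR
      rw [hd1] at h1
      rw [hR'def, Multiset.card_erase_of_mem hl0R, h1]
      rfl
    -- choice of radii
    obtain ⟨dr, hdr, hthick⟩ := (isCompact_closedBall (0 : ℂ) 1).exists_thickening_subset_open
      hUo hUsub
    have hball : Metric.ball (0 : ℂ) (dr + 1) ⊆ U := by
      rw [← thickening_closedBall hdr zero_le_one]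
      exact hthick
    set ρ : ℝ := 1 + dr / 2 with hρdef
    set ρ₂ : ℝ := 1 + 3 * dr / 4 with hρ₂def
    have hρ1 : 1 < ρ := by rw [hρdef]; linarith
    have hρρ₂ : ρ < ρ₂ := by rw [hρdef, hρ₂def]; linarith
    have hρ₂U : Metric.closedBall (0 : ℂ) ρ₂ ⊆ U :=
      subset_trans (Metric.closedBall_subset_ball (by rw [hρ₂def]; linarith)) hball
    have hρpos : 0 < ρ := by linarith
    -- the function g0 and its normalized quotient h1
    have hdenne : ∀ w ∈ U, 1 - (starRingEnd ℂ) α * h w ≠ 0 := fun w hw =>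
      one_sub_ne' hα (hval w hw)
    set g0 : ℂ → ℂ := fun w =>
      (α - h w) / (1 - (starRingEnd ℂ) α * h w) * (1 - (starRingEnd ℂ) l0 * w) with hg0def
    have hg0diff : DifferentiableOn ℂ g0 U := by
      apply DifferentiableOn.mul
      · apply DifferentiableOn.div
        · exact (differentiableOn_const α).sub hdiff
        · exact (differentiableOn_const 1).sub ((differentiableOn_const _).mul hdiff)
        · exact hdenne
      · exact (differentiableOn_const 1).sub
          ((differentiableOn_const _).mul differentiableOn_id)
    have hg0l0 : g0 l0 = 0 := by
      rw [hg0def]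
      simp only [← hαdef, sub_self, zero_div, zero_mul]
    set h1 : ℂ → ℂ := fun w => -(dslope g0 l0 w) with hh1def
    have hl0mem₂ : l0 ∈ Metric.ball (0 : ℂ) ρ₂ := by
      rw [mem_ball_zero_iff]
      calc ‖l0‖ < 1 := hl0
        _ < ρ₂ := lt_trans hρ1 hρρ₂
    have hh1diff : DifferentiableOn ℂ h1 (Metric.ball (0 : ℂ) ρ₂) := by
      apply DifferentiableOn.neg
      rw [Complex.differentiableOn_dslope (isOpen_ball.mem_nhds hl0mem₂)]
      exact hg0diff.mono (subset_trans Metric.ball_subset_closedBall hρ₂U)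
    have hh1val : ∀ w : ℂ, w ≠ l0 →
        h1 w = (α - h w) / (1 - (starRingEnd ℂ) α * h w) *
          ((1 - (starRingEnd ℂ) l0 * w) / (l0 - w)) := by
      intro w hw
      have hds : dslope g0 l0 w = g0 w / (w - l0) := by
        rw [dslope_of_ne g0 hw, slope_def_field, hg0l0, sub_zero]
      have hgw : g0 w = (α - h w) / (1 - (starRingEnd ℂ) α * h w) *
          (1 - (starRingEnd ℂ) l0 * w) := rfl
      show -(dslope g0 l0 w) = _
      rw [hds, hgw, mul_div_assoc, show l0 - w = -(w - l0) from by ring, div_neg, mul_neg]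
    have hsphere : ∀ w ∈ Metric.sphere (0 : ℂ) ρ, ‖h1 w‖ < 1 :=
      sphere_bound hρ1 hα hl0 hval
        (fun w hw => hρ₂U (by rw [mem_closedBall_zero_iff, hw]; exact hρρ₂.le)) hh1val
    have hval1 : ∀ w ∈ Metric.ball (0 : ℂ) ρ, ‖h1 w‖ < 1 :=
      maxmod_ball hρpos hρρ₂ hh1diff hsphere
    -- the new data
    set ω' : ℂ := -(c * (starRingEnd ℂ) ω) / (starRingEnd ℂ) c with hω'def
    have hω'1 : ‖ω'‖ = 1 := by
      rw [hω'def, norm_div, norm_neg, norm_mul, RCLike.norm_conj, RCLike.norm_conj, hω,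
        mul_one, div_self (norm_ne_zero_iff.mpr hc)]
    have hω2 : ω * (starRingEnd ℂ) ω = 1 := by
      rw [Complex.mul_conj]
      norm_cast
      rw [← Complex.sq_norm, hω, one_pow]
    set lam' : Fin (k + 1) → ℂ := fun j => lam j.succ with hlam'def
    have hinj' : Function.Injective lam' := fun i j hij => Fin.succ_injective _ (hinj hij)
    have hlam'lt : ∀ j, ‖lam' j‖ < 1 := fun j => hlam j.succ
    -- the interpolation identity for h1
    have hint' : ∀ j : Fin (k + 1), h1 (lam' j) =
        ω' * (R'.map fun r => (r - lam' j) / (1 - (starRingEnd ℂ) r * lam' j)).prod := by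
      intro j
      set z := lam' j with hzdef
      have hz1 : ‖z‖ < 1 := hlam'lt j
      have hzU : z ∈ U := hmemU z hz1.le
      have hzl0 : z ≠ l0 := by
        intro he
        have h2 : (j.succ : Fin (k + 2)) = 0 := hinj he
        exact Fin.succ_ne_zero j h2
      have hQz : Qf a z ≠ 0 := Qf_ne_zero ha hz1.le
      have hhz : h z * Qf a z = ω * Pf a z := by
        have h2 : h z = ω * (Pf a z / Qf a z) := by
          have h3 := hint j.succ
          rw [msProd_div] at h3
          exact h3
        rw [mul_div_assoc'] at h2
        rw [eq_div_iff hQz] at h2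
        linear_combination h2
      have hAp : (R'.map fun r => z - r).prod
          = δ * (R'.map fun r => r - z).prod := by
        calc (R'.map fun r => z - r).prod = (R'.map fun r => -(r - z)).prod := by
              apply congrArg
              apply Multiset.map_congr rfl
              intro r _
              ring
          _ = (-1 : ℂ) ^ Multiset.card R' * (R'.map fun r => r - z).prod := msProd_neg _ _
          _ = δ * (R'.map fun r => r - z).prod := by rw [hcardR', hδdef]
      have hNz : α * Qf a z - ω * Pf a z
          = c * ((z - l0) * (δ * (R'.map fun r => r - z).prod)) := by
        rw [hNeval z, hRcons, Multiset.map_cons, Multiset.prod_cons, hAp]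
      have hBp_ne : ∀ r ∈ R', (1 - (starRingEnd ℂ) r * z) ≠ 0 := fun r hr =>
        one_sub_ne' (hrootR' r hr) hz1
      have hBne : (R'.map fun r => 1 - (starRingEnd ℂ) r * z).prod ≠ 0 :=
        msProd_ne_zero _ _ hBp_ne
      have h1l0 : 1 - (starRingEnd ℂ) l0 * z ≠ 0 := one_sub_ne' hl0 hz1
      have hIdenz : δ * ((starRingEnd ℂ) ω * Qf a z - (starRingEnd ℂ) α * Pf a z) =
          (starRingEnd ℂ) c * ((1 - (starRingEnd ℂ) l0 * z) *
            (R'.map fun r => 1 - (starRingEnd ℂ) r * z).prod) := by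
        have h2 := hIden z
        rw [hRcons, Multiset.map_cons, Multiset.prod_cons] at h2
        exact h2
      have hzl0ne : l0 - z ≠ 0 := sub_ne_zero.mpr (Ne.symm hzl0)
      have hMden : 1 - (starRingEnd ℂ) α * h z ≠ 0 := hdenne z hzU
      rw [hh1val z hzl0, msProd_div, hω'def]
      exact scalar_value hω2 hδ2 hωne hδne hcc hQz hBne h1l0 hzl0ne hMden hhz hNz hIdenz
    -- apply the induction hypothesis
    exact IH ω' R' hω'1 hcardR' hrootR' lam' hinj' hlam'lt (Metric.ball 0 ρ) h1 isOpen_ball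
      (Metric.closedBall_subset_ball hρ1) (hh1diff.mono (Metric.ball_subset_ball hρρ₂.le))
      hval1 hint'


end BlaschkeAux

theorem stmt0 {n : ℕ} (D : Set (Fin n → ℂ)) (hDo : IsOpen D) (hDc : IsConnected D)
    (f : ℂ → Fin n → ℂ) (F : (Fin n → ℂ) → ℂ)
    (hf : DifferentiableOn ℂ f 𝔻) (hfD : ∀ z ∈ 𝔻, f z ∈ D)
    (hF : DifferentiableOn ℂ F D) (hFD : ∀ w ∈ D, F w ∈ 𝔻)
    (m : ℕ) (hm : 1 ≤ m) (hB : IsBlaschke m (fun z => F (f z))) :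
    IsMExtremal D (m + 1) f := by
  obtain ⟨ω, av, hω, hav, hFf⟩ := hB
  refine ⟨hf, hfD, fun lam hinj hlam => ?_⟩
  rintro ⟨U, g, hUo, hUsub, hgd, hgD, hgi⟩
  have hmem𝔻 : ∀ j, ‖lam j‖ < 1 := fun j => by
    have h1 := hlam j
    rwa [𝔻, mem_ball_zero_iff] at h1
  set aM : Multiset ℂ := Finset.univ.val.map av with haM
  have hcard : Multiset.card aM = m := by simp [haM]
  have hmem : ∀ x ∈ aM, ‖x‖ < 1 := by
    intro x hx
    rw [haM, Multiset.mem_map] at hx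
    obtain ⟨j, _, rfl⟩ := hx
    have h1 := hav j
    rwa [𝔻, mem_ball_zero_iff] at h1
  have hdiff : DifferentiableOn ℂ (fun z => F (g z)) U :=
    hF.comp hgd fun z hz => hgD z hz
  have hval : ∀ z ∈ U, ‖F (g z)‖ < 1 := by
    intro z hz
    have h1 := hFD _ (hgD z hz)
    rwa [𝔻, mem_ball_zero_iff] at h1
  have hint : ∀ j, F (g (lam j)) =
      ω * (aM.map fun x => (x - lam j) / (1 - (starRingEnd ℂ) x * lam j)).prod := by
    intro j
    have h1 : F (g (lam j)) = F (f (lam j)) := by rw [hgi j]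
    have h2 : F (f (lam j)) =
        ω * ∏ i : Fin m, (av i - lam j) / (1 - (starRingEnd ℂ) (av i) * lam j) :=
      hFf (lam j) (hlam j)
    rw [h1, h2]
    congr 1
    rw [haM, Multiset.map_map]
    rfl
  exact BlaschkeAux.blaschke_key m ω aM hω hcard hmem lam hinj hmem𝔻 U
    (fun z => F (g z)) hUo hUsub hdiff hval hint

end
end

section
/- A finite Blaschke product B of degree m is (m+1)-extremal in the unit disc: for any m+1 distinct points λ₁,…,λ_{m+1} ∈ 𝔻, there is no function g holomorphic on a neighborhood of the closed unit disc with g(𝔻) relatively compact in 𝔻 and g(λⱼ) = B(λⱼ) for all j = 1,…,m+1. -/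
open Complex Metric Set

noncomputable section

variable {E : Type*} [NormedAddCommGroup E] [NormedSpace ℂ E]

lemma aux_ne {μ ν : ℂ} (h1 : ‖μ‖ < 1) (h2 : ‖ν‖ ≤ 1) : 1 - (starRingEnd ℂ) μ * ν ≠ 0 := by
  intro h
  have h3 : (starRingEnd ℂ) μ * ν = 1 := by linear_combination -h
  have : ‖(starRingEnd ℂ) μ * ν‖ < 1 := by
    rw [norm_mul, RCLike.norm_conj]
    calc ‖μ‖ * ‖ν‖ ≤ ‖μ‖ * 1 := by nlinarith [norm_nonneg μ]
    _ < 1 := by simpa using h1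
  rw [h3] at this; simp at this

lemma aux_conj_inv {μ z : ℂ} (hμ : ‖μ‖ < 1) (hz : ‖z‖ = 1) :
    (starRingEnd ℂ) ((1 - (starRingEnd ℂ) μ * z)⁻¹) = z * (z - μ)⁻¹ := by
  have hz0 : z ≠ 0 := by intro h; rw [h] at hz; simp at hz
  have hzc : (starRingEnd ℂ) z = z⁻¹ := by
    have : z * (starRingEnd ℂ) z = 1 := by
      rw [Complex.mul_conj]; norm_cast
      rw [Complex.normSq_eq_norm_sq, hz]; norm_num
    field_simp at this ⊢
    linear_combination this
  have h1 : (1 - (starRingEnd ℂ) μ * z) ≠ 0 := aux_ne hμ (le_of_eq hz)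
  have h2 : z - μ ≠ 0 := by
    intro h
    have : z = μ := by linear_combination h
    rw [this] at hz; rw [hz] at hμ; simp at hμ
  rw [map_inv₀, map_sub, map_one, map_mul, Complex.conj_conj, hzc]
  rw [inv_eq_iff_eq_inv]
  field_simp

lemma aux_repro {u : ℂ → ℂ} (hu : DiffContOnCl ℂ u (Metric.ball 0 1)) {μ : ℂ} (hμ : ‖μ‖ < 1) :
    (∫ θ in (0:ℝ)..(2*Real.pi),
      u (circleMap 0 1 θ) * (starRingEnd ℂ) ((1 - (starRingEnd ℂ) μ * circleMap 0 1 θ)⁻¹))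
    = (2*Real.pi : ℝ) * u μ := by
  have hμ' : μ ∈ Metric.ball (0:ℂ) 1 := by simpa using hμ
  have key := hu.circleIntegral_sub_inv_smul hμ'
  rw [circleIntegral] at key
  simp only [deriv_circleMap, smul_eq_mul] at key
  have hcm : ∀ θ : ℝ, ‖circleMap 0 1 θ‖ = 1 := by
    intro θ; rw [norm_circleMap_zero]; norm_num
  have heq : ∀ θ : ℝ,
      u (circleMap 0 1 θ) * (starRingEnd ℂ) ((1 - (starRingEnd ℂ) μ * circleMap 0 1 θ)⁻¹)
      = Complex.I⁻¹ * (circleMap 0 1 θ * Complex.I * ((circleMap 0 1 θ - μ)⁻¹ * u (circleMap 0 1 θ))) := by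
    intro θ
    rw [aux_conj_inv hμ (hcm θ)]
    have : Complex.I ≠ 0 := Complex.I_ne_zero
    rw [mul_comm (circleMap 0 1 θ) Complex.I, mul_assoc, inv_mul_cancel_left₀ this]
    ring
  calc (∫ θ in (0:ℝ)..(2*Real.pi),
      u (circleMap 0 1 θ) * (starRingEnd ℂ) ((1 - (starRingEnd ℂ) μ * circleMap 0 1 θ)⁻¹))
      = ∫ θ in (0:ℝ)..(2*Real.pi),
        Complex.I⁻¹ * (circleMap 0 1 θ * Complex.I * ((circleMap 0 1 θ - μ)⁻¹ * u (circleMap 0 1 θ))) := by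
        simp only [heq]
    _ = Complex.I⁻¹ * ∫ θ in (0:ℝ)..(2*Real.pi),
        circleMap 0 1 θ * Complex.I * ((circleMap 0 1 θ - μ)⁻¹ * u (circleMap 0 1 θ)) := by
        simp_rw [← smul_eq_mul (a := Complex.I⁻¹)]
        exact intervalIntegral.integral_smul _ _
    _ = Complex.I⁻¹ * ((2 * Real.pi * Complex.I) * u μ) := by rw [key]
    _ = (2*Real.pi : ℝ) * u μ := by
        have : Complex.I ≠ 0 := Complex.I_ne_zero
        field_simp
        push_cast
        ring

lemma aux_telescope (X : ℕ → ℂ) (n : ℕ) :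
    1 - ∏ j ∈ Finset.range n, X j
    = ∑ l ∈ Finset.range n, (∏ j ∈ Finset.range l, X j) * (1 - X l) := by
  induction n with
  | zero => simp
  | succ n ih =>
    rw [Finset.sum_range_succ, Finset.prod_range_succ, ← ih]; ring

lemma aux_factor {α z w : ℂ} (hα : ‖α‖ < 1) (hz : ‖z‖ < 1) (hw : ‖w‖ < 1) :
    1 - (starRingEnd ℂ) ((α - z)/(1 - (starRingEnd ℂ) α * z))
      * ((α - w)/(1 - (starRingEnd ℂ) α * w))
    = (1 - (starRingEnd ℂ) α * α) * (1 - (starRingEnd ℂ) z * w)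
      * (starRingEnd ℂ) ((1 - (starRingEnd ℂ) α * z)⁻¹) * (1 - (starRingEnd ℂ) α * w)⁻¹ := by
  have h1 : 1 - (starRingEnd ℂ) α * z ≠ 0 := aux_ne hα hz.le
  have h2 : 1 - (starRingEnd ℂ) α * w ≠ 0 := aux_ne hα hw.le
  have h1' : 1 - α * (starRingEnd ℂ) z ≠ 0 := by
    intro h
    apply h1
    have := congrArg (starRingEnd ℂ) h
    simpa [map_sub, map_mul, Complex.conj_conj] using this
  have h1'' : 1 - (starRingEnd ℂ) z * α ≠ 0 := by rwa [mul_comm]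
  simp only [map_div₀, map_sub, map_inv₀, map_one, map_mul, Complex.conj_conj]
  field_simp
  ring

lemma aux_kernel (n : ℕ) (a : ℕ → ℂ) (ha : ∀ i, ‖a i‖ < 1) (ω : ℂ) (hω : ‖ω‖ = 1)
    {z w : ℂ} (hz : ‖z‖ < 1) (hw : ‖w‖ < 1) :
    1 - (starRingEnd ℂ) (ω * ∏ i ∈ Finset.range n, (a i - z)/(1 - (starRingEnd ℂ) (a i) * z))
      * (ω * ∏ i ∈ Finset.range n, (a i - w)/(1 - (starRingEnd ℂ) (a i) * w))
    = (1 - (starRingEnd ℂ) z * w) * ∑ l ∈ Finset.range n, ((1 - (starRingEnd ℂ) (a l) * a l) *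
        (starRingEnd ℂ) ((∏ i ∈ Finset.range l, (a i - z)/(1 - (starRingEnd ℂ) (a i) * z))
          * (1 - (starRingEnd ℂ) (a l) * z)⁻¹) *
        ((∏ i ∈ Finset.range l, (a i - w)/(1 - (starRingEnd ℂ) (a i) * w))
          * (1 - (starRingEnd ℂ) (a l) * w)⁻¹)) := by
  have hωω : (starRingEnd ℂ) ω * ω = 1 := by
    rw [mul_comm, Complex.mul_conj]; norm_cast
    rw [Complex.normSq_eq_norm_sq, hω]; norm_num
  set X : ℕ → ℂ := fun l => (starRingEnd ℂ) ((a l - z)/(1 - (starRingEnd ℂ) (a l) * z))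
    * ((a l - w)/(1 - (starRingEnd ℂ) (a l) * w)) with hX
  have hL : (starRingEnd ℂ) (ω * ∏ i ∈ Finset.range n, (a i - z)/(1 - (starRingEnd ℂ) (a i) * z))
      * (ω * ∏ i ∈ Finset.range n, (a i - w)/(1 - (starRingEnd ℂ) (a i) * w))
      = ∏ l ∈ Finset.range n, X l := by
    rw [map_mul, map_prod]
    calc (starRingEnd ℂ) ω * (∏ i ∈ Finset.range n,
          (starRingEnd ℂ) ((a i - z)/(1 - (starRingEnd ℂ) (a i) * z)))
          * (ω * ∏ i ∈ Finset.range n, (a i - w)/(1 - (starRingEnd ℂ) (a i) * w))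
        = ((starRingEnd ℂ) ω * ω) * ((∏ i ∈ Finset.range n,
            (starRingEnd ℂ) ((a i - z)/(1 - (starRingEnd ℂ) (a i) * z)))
          * ∏ i ∈ Finset.range n, (a i - w)/(1 - (starRingEnd ℂ) (a i) * w)) := by ring
      _ = ∏ l ∈ Finset.range n, X l := by
          rw [hωω, one_mul, ← Finset.prod_mul_distrib]
  rw [hL, aux_telescope X n, Finset.mul_sum]
  refine Finset.sum_congr rfl ?_
  intro l _
  have hfac := aux_factor (ha l) hz hw
  have hprod : ∏ j ∈ Finset.range l, X j
      = (starRingEnd ℂ) (∏ i ∈ Finset.range l, (a i - z)/(1 - (starRingEnd ℂ) (a i) * z))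
        * ∏ i ∈ Finset.range l, (a i - w)/(1 - (starRingEnd ℂ) (a i) * w) := by
    rw [map_prod, ← Finset.prod_mul_distrib]
  rw [hprod, hX]
  simp only [map_mul]
  rw [hfac]
  ring


set_option maxHeartbeats 2000000 in
theorem stmt1 (m : ℕ) (B : ℂ → ℂ) (hB : IsBlaschke m B)
    (lam : Fin (m + 1) → ℂ) (hinj : Function.Injective lam) (hmem : ∀ j, lam j ∈ 𝔻) :
    ¬ ∃ (U : Set ℂ) (g : ℂ → ℂ), IsOpen U ∧ Metric.closedBall (0 : ℂ) 1 ⊆ U ∧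
        DifferentiableOn ℂ g U ∧ (∀ z ∈ U, g z ∈ 𝔻) ∧
        closure (g '' 𝔻) ⊆ 𝔻 ∧ ∀ j, g (lam j) = B (lam j) := by
  rintro ⟨U, g, hUo, hUb, hgd, hgD, hgcl, hgint⟩
  obtain ⟨ω, a, hω, ha, hBf⟩ := hB
  have hlam : ∀ j, ‖lam j‖ < 1 := fun j => by simpa [𝔻, Metric.mem_ball] using hmem j
  set a' : ℕ → ℂ := fun i => if h : i < m then a ⟨i, h⟩ else 0 with ha'def
  have ha'n : ∀ i, ‖a' i‖ < 1 := by
    intro i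
    by_cases h : i < m
    · simpa [ha'def, h] using (by simpa [𝔻, Metric.mem_ball] using ha ⟨i, h⟩ : ‖a ⟨i, h⟩‖ < 1)
    · simp [ha'def, h]
  -- bound r on g over the closed disc
  obtain ⟨r, hr1, hr0, hgr⟩ : ∃ r : ℝ, r < 1 ∧ 0 ≤ r ∧
      ∀ z ∈ Metric.closedBall (0:ℂ) 1, ‖g z‖ ≤ r := by
    have hbd : Bornology.IsBounded (closure (g '' 𝔻)) := Metric.isBounded_ball.subset hgcl
    have hcpt : IsCompact (closure (g '' 𝔻)) :=
      Metric.isCompact_of_isClosed_isBounded isClosed_closure hbd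
    have hne : (closure (g '' 𝔻)).Nonempty := by
      refine Set.Nonempty.closure ⟨g 0, 0, ?_, rfl⟩
      simp [𝔻]
    obtain ⟨x0, hx0mem, hx0max⟩ := hcpt.exists_isMaxOn hne continuous_norm.continuousOn
    refine ⟨‖x0‖, ?_, norm_nonneg _, ?_⟩
    · simpa [𝔻, Metric.mem_ball] using hgcl hx0mem
    · intro z hz
      have hzc : z ∈ closure 𝔻 := by
        rw [show 𝔻 = Metric.ball (0:ℂ) 1 from rfl, closure_ball (0:ℂ) one_ne_zero]
        exact hz
      have : g z ∈ closure (g '' 𝔻) := by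
        have hcont : ContinuousOn g (closure 𝔻) := by
          refine (hgd.continuousOn).mono ?_
          rw [show 𝔻 = Metric.ball (0:ℂ) 1 from rfl, closure_ball (0:ℂ) one_ne_zero]
          exact hUb
        exact hcont.image_closure ⟨z, hzc, rfl⟩
      exact hx0max this
  -- values
  set w : Fin (m+1) → ℂ := fun j => g (lam j) with hwdef
  have hBval : ∀ j, w j
      = ω * ∏ i ∈ Finset.range m, (a' i - lam j)/(1 - (starRingEnd ℂ) (a' i) * lam j) := by
    intro j
    rw [hwdef]
    simp only []
    rw [hgint j, hBf (lam j) (hmem j)]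
    congr 1
    rw [← Fin.prod_univ_eq_prod_range (fun i => (a' i - lam j)/(1 - (starRingEnd ℂ) (a' i) * lam j)) m]
    refine Finset.prod_congr rfl fun i _ => ?_
    simp [ha'def, i.isLt]
  -- the matrix and the vector d
  set M0 : Matrix (Fin m) (Fin (m+1)) ℂ := fun l j =>
    (∏ i ∈ Finset.range l, (a' i - lam j)/(1 - (starRingEnd ℂ) (a' i) * lam j))
      * (1 - (starRingEnd ℂ) (a' l) * lam j)⁻¹ with hM0def
  obtain ⟨c, hcne, hc⟩ : ∃ c : Fin (m+1) → ℂ, c ≠ 0 ∧ M0.mulVec c = 0 := by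
    have hni : ¬ Function.Injective M0.mulVecLin := by
      intro hi
      have := LinearMap.finrank_le_finrank_of_injective hi
      rw [Module.finrank_fintype_fun_eq_card, Module.finrank_fintype_fun_eq_card] at this
      simp at this
    obtain ⟨x, y, hxy, hne⟩ := Function.not_injective_iff.1 hni
    refine ⟨x - y, sub_ne_zero.2 hne, ?_⟩
    have : M0.mulVecLin (x - y) = 0 := by rw [map_sub, hxy, sub_self]
    simpa [Matrix.mulVecLin_apply] using this
  set d : Fin (m+1) → ℂ := fun j => (starRingEnd ℂ) (c j) with hddef
  set k : ℂ → ℂ → ℂ := fun μ z => (1 - (starRingEnd ℂ) μ * z)⁻¹ with hkdef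
  set F : ℂ → ℂ := fun z => ∑ j, d j * k (lam j) z with hFdef
  set G : ℂ → ℂ := fun z => ∑ j, (d j * (starRingEnd ℂ) (w j)) * k (lam j) z with hGdef
  -- differentiability
  have hkda : ∀ (μ : ℂ), ‖μ‖ < 1 → ∀ z ∈ Metric.closedBall (0:ℂ) 1,
      DifferentiableAt ℂ (k μ) z := by
    intro μ hμ z hz
    rw [hkdef]
    exact ((differentiableAt_const _).sub ((differentiableAt_const _).mul differentiableAt_id)).inv
      (aux_ne hμ (mem_closedBall_zero_iff.1 hz))
  have hFda : ∀ z ∈ Metric.closedBall (0:ℂ) 1, DifferentiableAt ℂ F z := by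
    intro z hz
    rw [hFdef]
    exact DifferentiableAt.fun_sum fun j _ => (differentiableAt_const _).mul (hkda _ (hlam j) z hz)
  have hGda : ∀ z ∈ Metric.closedBall (0:ℂ) 1, DifferentiableAt ℂ G z := by
    intro z hz
    rw [hGdef]
    exact DifferentiableAt.fun_sum fun j _ => (differentiableAt_const _).mul (hkda _ (hlam j) z hz)
  have hgda : ∀ z ∈ Metric.closedBall (0:ℂ) 1, DifferentiableAt ℂ g z := by
    intro z hz
    exact hgd.differentiableAt (hUo.mem_nhds (hUb hz))
  have mk_cl : ∀ u : ℂ → ℂ, (∀ z ∈ Metric.closedBall (0:ℂ) 1, DifferentiableAt ℂ u z) →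
      DiffContOnCl ℂ u (Metric.ball 0 1) := by
    intro u hu
    refine ⟨fun z hz => (hu z (Metric.ball_subset_closedBall hz)).differentiableWithinAt, ?_⟩
    rw [closure_ball (0:ℂ) one_ne_zero]
    exact fun z hz => (hu z hz).continuousAt.continuousWithinAt
  have hFcl : DiffContOnCl ℂ F (Metric.ball 0 1) := mk_cl F hFda
  have hGcl : DiffContOnCl ℂ G (Metric.ball 0 1) := mk_cl G hGda
  have hgGcl : DiffContOnCl ℂ (fun z => g z * G z) (Metric.ball 0 1) :=
    mk_cl _ (fun z hz => (hgda z hz).mul (hGda z hz))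
  -- continuity on the circle
  have hsph : ∀ θ : ℝ, circleMap 0 1 θ ∈ Metric.closedBall (0:ℂ) 1 := by
    intro θ
    rw [mem_closedBall_zero_iff, norm_circleMap_zero]
    norm_num
  have hcomp_c : ∀ u : ℂ → ℂ, (∀ z ∈ Metric.closedBall (0:ℂ) 1, DifferentiableAt ℂ u z) →
      Continuous fun θ : ℝ => u (circleMap 0 1 θ) := by
    intro u hu
    refine ContinuousOn.comp_continuous
      (s := Metric.closedBall (0:ℂ) 1)
      (fun z hz => (hu z hz).continuousAt.continuousWithinAt)
      (continuous_circleMap 0 1) hsph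
  have hFc : Continuous fun θ : ℝ => F (circleMap 0 1 θ) := hcomp_c F hFda
  have hGc : Continuous fun θ : ℝ => G (circleMap 0 1 θ) := hcomp_c G hGda
  have hgc : Continuous fun θ : ℝ => g (circleMap 0 1 θ) := hcomp_c g hgda
  -- integral identities
  have hkc : ∀ j : Fin (m+1), Continuous fun θ : ℝ => k (lam j) (circleMap 0 1 θ) :=
    fun j => hcomp_c (k (lam j)) (hkda _ (hlam j))
  have hrepro2 : ∀ (u v : ℂ → ℂ) (e : Fin (m+1) → ℂ), DiffContOnCl ℂ u (Metric.ball 0 1) →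
      (Continuous fun θ : ℝ => u (circleMap 0 1 θ)) →
      (∀ z, v z = ∑ j, e j * k (lam j) z) →
      (∫ θ in (0:ℝ)..(2*Real.pi), u (circleMap 0 1 θ) * (starRingEnd ℂ) (v (circleMap 0 1 θ)))
        = (2*Real.pi : ℝ) * ∑ j, (starRingEnd ℂ) (e j) * u (lam j) := by
    intro u v e hu huc hv
    have hpt : ∀ θ : ℝ, u (circleMap 0 1 θ) * (starRingEnd ℂ) (v (circleMap 0 1 θ))
        = ∑ j, (starRingEnd ℂ) (e j) •
            (u (circleMap 0 1 θ) * (starRingEnd ℂ) (k (lam j) (circleMap 0 1 θ))) := by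
      intro θ
      rw [hv, map_sum, Finset.mul_sum]
      refine Finset.sum_congr rfl fun j _ => ?_
      rw [map_mul, smul_eq_mul]
      ring
    calc (∫ θ in (0:ℝ)..(2*Real.pi), u (circleMap 0 1 θ) * (starRingEnd ℂ) (v (circleMap 0 1 θ)))
        = ∫ θ in (0:ℝ)..(2*Real.pi), ∑ j, (starRingEnd ℂ) (e j) •
            (u (circleMap 0 1 θ) * (starRingEnd ℂ) (k (lam j) (circleMap 0 1 θ))) := by
          simp only [hpt]
      _ = ∑ j, ∫ θ in (0:ℝ)..(2*Real.pi), (starRingEnd ℂ) (e j) •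
            (u (circleMap 0 1 θ) * (starRingEnd ℂ) (k (lam j) (circleMap 0 1 θ))) := by
          refine intervalIntegral.integral_finset_sum fun j _ => ?_
          exact ((huc.mul (Complex.continuous_conj.comp (hkc j))).const_smul ((starRingEnd ℂ) (e j))).intervalIntegrable _ _
      _ = ∑ j, (starRingEnd ℂ) (e j) • ((2*Real.pi : ℝ) * u (lam j)) := by
          refine Finset.sum_congr rfl fun j _ => ?_
          rw [intervalIntegral.integral_smul]
          congr 1
          have := aux_repro hu (hlam j)
          simpa [hkdef] using this
      _ = (2*Real.pi : ℝ) * ∑ j, (starRingEnd ℂ) (e j) * u (lam j) := by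
          rw [Finset.mul_sum]
          refine Finset.sum_congr rfl fun j _ => ?_
          rw [smul_eq_mul]
          ring
  have hIFF : (∫ θ in (0:ℝ)..(2*Real.pi), F (circleMap 0 1 θ) * (starRingEnd ℂ) (F (circleMap 0 1 θ)))
      = (2*Real.pi : ℝ) * ∑ j, (starRingEnd ℂ) (d j) * F (lam j) :=
    hrepro2 F F d hFcl hFc (fun z => by rw [hFdef])
  have hIGG : (∫ θ in (0:ℝ)..(2*Real.pi), G (circleMap 0 1 θ) * (starRingEnd ℂ) (G (circleMap 0 1 θ)))
      = (2*Real.pi : ℝ) * ∑ j, ((starRingEnd ℂ) (d j) * w j) * G (lam j) := by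
    rw [hrepro2 G G (fun j => d j * (starRingEnd ℂ) (w j)) hGcl hGc (fun z => by rw [hGdef])]
    congr 1
    refine Finset.sum_congr rfl fun j _ => ?_
    simp only [map_mul, Complex.conj_conj]
  have hIgG : (∫ θ in (0:ℝ)..(2*Real.pi),
        (g (circleMap 0 1 θ) * G (circleMap 0 1 θ)) * (starRingEnd ℂ) (F (circleMap 0 1 θ)))
      = (2*Real.pi : ℝ) * ∑ j, ((starRingEnd ℂ) (d j) * w j) * G (lam j) := by
    rw [hrepro2 (fun z => g z * G z) F d hgGcl (hgc.mul hGc) (fun z => by rw [hFdef])]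
    congr 1
    refine Finset.sum_congr rfl fun j _ => ?_
    simp only [hwdef]
    ring
  -- the Pick-matrix algebraic identity
  set t : ℕ → ℂ := fun l => 1 - (starRingEnd ℂ) (a' l) * a' l with htdef
  set El : ℕ → ℂ → ℂ := fun l z =>
    (∏ i ∈ Finset.range l, (a' i - z)/(1 - (starRingEnd ℂ) (a' i) * z))
      * (1 - (starRingEnd ℂ) (a' l) * z)⁻¹ with hEldef
  have hSij : ∀ i j : Fin (m+1), (1 - (starRingEnd ℂ) (w i) * w j) * k (lam i) (lam j)
      = ∑ l ∈ Finset.range m, t l * (starRingEnd ℂ) (El l (lam i)) * El l (lam j) := by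
    intro i j
    have hk := aux_kernel m a' ha'n ω hω (hlam i) (hlam j)
    have hkk : k (lam i) (lam j) = (1 - (starRingEnd ℂ) (lam i) * lam j)⁻¹ := by rw [hkdef]
    rw [hBval i, hBval j, hkk, hk, mul_comm ((1:ℂ) - (starRingEnd ℂ) (lam i) * lam j),
      mul_inv_cancel_right₀ (aux_ne (hlam i) (hlam j).le)]
  have hzero : ∀ l ∈ Finset.range m, (∑ j, (starRingEnd ℂ) (d j) * El l (lam j)) = 0 := by
    intro l hl
    have hlm := Finset.mem_range.1 hl
    have h0 := congrFun hc ⟨l, hlm⟩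
    rw [Matrix.mulVec, Pi.zero_apply] at h0
    calc ∑ j, (starRingEnd ℂ) (d j) * El l (lam j)
        = ∑ j, M0 ⟨l, hlm⟩ j * c j := by
          refine Finset.sum_congr rfl fun j _ => ?_
          rw [hddef]
          simp only [Complex.conj_conj]
          rw [hEldef, hM0def]
          ring
      _ = 0 := by
          rw [← h0]
          simp [dotProduct]
  have hC : ∑ j, (starRingEnd ℂ) (d j) * F (lam j)
      = ∑ j, ((starRingEnd ℂ) (d j) * w j) * G (lam j) := by
    rw [← sub_eq_zero]
    have hFv : ∀ j, F (lam j) = ∑ i, d i * k (lam i) (lam j) := fun j => by rw [hFdef]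
    have hGv : ∀ j, G (lam j) = ∑ i, (d i * (starRingEnd ℂ) (w i)) * k (lam i) (lam j) :=
      fun j => by rw [hGdef]
    calc (∑ j, (starRingEnd ℂ) (d j) * F (lam j))
          - ∑ j, ((starRingEnd ℂ) (d j) * w j) * G (lam j)
        = ∑ j, ∑ i, (d i * (starRingEnd ℂ) (d j))
            * ((1 - (starRingEnd ℂ) (w i) * w j) * k (lam i) (lam j)) := by
          rw [← Finset.sum_sub_distrib]
          refine Finset.sum_congr rfl fun j _ => ?_
          rw [hFv j, hGv j, Finset.mul_sum, Finset.mul_sum, ← Finset.sum_sub_distrib]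
          exact Finset.sum_congr rfl fun i _ => by ring
      _ = ∑ j, ∑ i, ∑ l ∈ Finset.range m,
            (d i * (starRingEnd ℂ) (d j)) * (t l * (starRingEnd ℂ) (El l (lam i)) * El l (lam j)) := by
          refine Finset.sum_congr rfl fun j _ => Finset.sum_congr rfl fun i _ => ?_
          rw [hSij i j, Finset.mul_sum]
      _ = ∑ j, ∑ l ∈ Finset.range m, ∑ i,
            (d i * (starRingEnd ℂ) (d j)) * (t l * (starRingEnd ℂ) (El l (lam i)) * El l (lam j)) :=
          Finset.sum_congr rfl fun j _ => Finset.sum_comm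
      _ = ∑ l ∈ Finset.range m, ∑ j, ∑ i,
            (d i * (starRingEnd ℂ) (d j)) * (t l * (starRingEnd ℂ) (El l (lam i)) * El l (lam j)) :=
          Finset.sum_comm
      _ = 0 := by
          refine Finset.sum_eq_zero fun l hl => ?_
          have h0 := hzero l hl
          calc (∑ j, ∑ i, (d i * (starRingEnd ℂ) (d j))
                * (t l * (starRingEnd ℂ) (El l (lam i)) * El l (lam j)))
              = ∑ j, ((starRingEnd ℂ) (d j) * El l (lam j))
                  * ∑ i, d i * (t l * (starRingEnd ℂ) (El l (lam i))) := by
                refine Finset.sum_congr rfl fun j _ => ?_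
                rw [Finset.mul_sum]
                exact Finset.sum_congr rfl fun i _ => by ring
            _ = (∑ j, (starRingEnd ℂ) (d j) * El l (lam j))
                  * ∑ i, d i * (t l * (starRingEnd ℂ) (El l (lam i))) := by
                rw [← Finset.sum_mul]
            _ = 0 := by rw [h0, zero_mul]
  -- real quantities
  set A : ℝ := ∫ θ in (0:ℝ)..(2*Real.pi), ‖F (circleMap 0 1 θ)‖^2 with hAdef
  set C : ℝ := ∫ θ in (0:ℝ)..(2*Real.pi), ‖G (circleMap 0 1 θ)‖^2 with hCdef
  have hAeq : ((A : ℂ)) = (2*Real.pi : ℝ) * ∑ j, (starRingEnd ℂ) (d j) * F (lam j) := by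
    rw [← hIFF, hAdef, ← intervalIntegral.integral_ofReal]
    refine intervalIntegral.integral_congr fun θ _ => ?_
    simp [Complex.mul_conj, Complex.normSq_eq_norm_sq]
  have hCeq : ((C : ℂ)) = (2*Real.pi : ℝ) * ∑ j, ((starRingEnd ℂ) (d j) * w j) * G (lam j) := by
    rw [← hIGG, hCdef, ← intervalIntegral.integral_ofReal]
    refine intervalIntegral.integral_congr fun θ _ => ?_
    simp [Complex.mul_conj, Complex.normSq_eq_norm_sq]
  have hACr : A = C := by
    have : (A : ℂ) = (C : ℂ) := by rw [hAeq, hCeq, hC]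
    exact_mod_cast this
  have hA0 : 0 ≤ A := by
    rw [hAdef]
    refine intervalIntegral.integral_nonneg (by positivity) fun u _ => sq_nonneg _
  have hrA : A ≤ r * A := by
    have hAC2 : (A : ℂ) = (∫ θ in (0:ℝ)..(2*Real.pi),
        (g (circleMap 0 1 θ) * G (circleMap 0 1 θ)) * (starRingEnd ℂ) (F (circleMap 0 1 θ))) := by
      rw [hIgG, ← hC, ← hAeq]
    have habs : A = ‖(∫ θ in (0:ℝ)..(2*Real.pi),
        (g (circleMap 0 1 θ) * G (circleMap 0 1 θ)) * (starRingEnd ℂ) (F (circleMap 0 1 θ)))‖ := by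
      rw [← hAC2, Complex.norm_real, Real.norm_eq_abs, _root_.abs_of_nonneg hA0]
    have hb1 : ‖(∫ θ in (0:ℝ)..(2*Real.pi),
        (g (circleMap 0 1 θ) * G (circleMap 0 1 θ)) * (starRingEnd ℂ) (F (circleMap 0 1 θ)))‖
        ≤ ∫ θ in (0:ℝ)..(2*Real.pi),
          ‖(g (circleMap 0 1 θ) * G (circleMap 0 1 θ)) * (starRingEnd ℂ) (F (circleMap 0 1 θ))‖ := by
      refine intervalIntegral.norm_integral_le_integral_norm (by positivity)
    have hb2 : (∫ θ in (0:ℝ)..(2*Real.pi),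
          ‖(g (circleMap 0 1 θ) * G (circleMap 0 1 θ)) * (starRingEnd ℂ) (F (circleMap 0 1 θ))‖)
        ≤ ∫ θ in (0:ℝ)..(2*Real.pi),
          (r/2) * (‖G (circleMap 0 1 θ)‖^2 + ‖F (circleMap 0 1 θ)‖^2) := by
      refine intervalIntegral.integral_mono_on (by positivity) ?_ ?_ ?_
      · exact (((hgc.mul hGc).mul (Complex.continuous_conj.comp hFc)).norm).intervalIntegrable _ _
      · exact (continuous_const.mul (((hGc.norm).pow 2).add ((hFc.norm).pow 2))).intervalIntegrable _ _
      · intro θ _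
        have hgb : ‖g (circleMap 0 1 θ)‖ ≤ r := hgr _ (hsph θ)
        have h1 : ‖(g (circleMap 0 1 θ) * G (circleMap 0 1 θ)) * (starRingEnd ℂ) (F (circleMap 0 1 θ))‖
            = ‖g (circleMap 0 1 θ)‖ * ‖G (circleMap 0 1 θ)‖ * ‖F (circleMap 0 1 θ)‖ := by
          rw [norm_mul, norm_mul, RCLike.norm_conj]
        rw [h1]
        have hGn : (0:ℝ) ≤ ‖G (circleMap 0 1 θ)‖ := norm_nonneg _
        have hFn : (0:ℝ) ≤ ‖F (circleMap 0 1 θ)‖ := norm_nonneg _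
        nlinarith [sq_nonneg (‖G (circleMap 0 1 θ)‖ - ‖F (circleMap 0 1 θ)‖),
          mul_nonneg hGn hFn]
    have hb3 : (∫ θ in (0:ℝ)..(2*Real.pi),
          (r/2) * (‖G (circleMap 0 1 θ)‖^2 + ‖F (circleMap 0 1 θ)‖^2)) = (r/2) * (C + A) := by
      rw [intervalIntegral.integral_const_mul]
      congr 1
      rw [intervalIntegral.integral_add (f := fun θ => ‖G (circleMap 0 1 θ)‖^2)
        (g := fun θ => ‖F (circleMap 0 1 θ)‖^2) (((hGc.norm).pow 2).intervalIntegrable _ _)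
        (((hFc.norm).pow 2).intervalIntegrable _ _), hCdef, hAdef]
    calc A ≤ ∫ θ in (0:ℝ)..(2*Real.pi),
          (r/2) * (‖G (circleMap 0 1 θ)‖^2 + ‖F (circleMap 0 1 θ)‖^2) := by
          rw [habs]; exact le_trans hb1 hb2
      _ = (r/2) * (C + A) := hb3
      _ = r * A := by rw [← hACr]; ring
  have hAz : A = 0 := by nlinarith
  -- dichotomy
  by_cases hFz : ∀ z ∈ Metric.sphere (0:ℂ) 1, F z = 0
  · -- then d = 0, contradiction
    set q : ℂ → ℂ := fun z => ∑ j, d j * ∏ i ∈ Finset.univ.erase j,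
      (1 - (starRingEnd ℂ) (lam i) * z) with hqdef
    have hqd : Differentiable ℂ q := by
      rw [hqdef]
      refine Differentiable.fun_sum fun j _ => Differentiable.const_mul ?_ _
      exact Differentiable.fun_finsetProd fun i _ =>
        (differentiable_const _).fun_sub ((differentiable_const _).fun_mul differentiable_id)
    have hq0s : ∀ z ∈ Metric.sphere (0:ℂ) 1, q z = 0 := by
      intro z hz
      have hzn : ‖z‖ = 1 := mem_sphere_zero_iff_norm.1 hz
      have hqF : q z = F z * ∏ i, (1 - (starRingEnd ℂ) (lam i) * z) := by
        rw [hFdef, hqdef]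
        simp only []
        rw [Finset.sum_mul]
        refine Finset.sum_congr rfl fun j _ => ?_
        rw [hkdef]
        simp only []
        rw [← Finset.mul_prod_erase Finset.univ _ (Finset.mem_univ j)]
        have hne := aux_ne (hlam j) (le_of_eq hzn)
        have hne' : 1 - z * (starRingEnd ℂ) (lam j) ≠ 0 := by rwa [mul_comm]
        field_simp
        simp only [mul_comm z]
      rw [hqF, hFz z hz, zero_mul]
    have hq0cb : ∀ z ∈ Metric.closedBall (0:ℂ) 1, q z = 0 := by
      intro z hz
      have hb : ‖q z‖ ≤ 0 := by
        refine Complex.norm_le_of_forall_mem_frontier_norm_le (U := Metric.ball (0:ℂ) 1)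
          Metric.isBounded_ball hqd.diffContOnCl ?_ ?_
        · intro x hx
          rw [frontier_ball (0:ℂ) one_ne_zero] at hx
          rw [hq0s x hx]
          simp
        · rwa [closure_ball (0:ℂ) one_ne_zero]
      exact norm_le_zero_iff.1 hb
    have hq0 : ∀ z : ℂ, q z = 0 := by
      have han : AnalyticOnNhd ℂ q Set.univ := analyticOnNhd_univ_iff_differentiable.2 hqd
      have hev : q =ᶠ[nhds (0:ℂ)] 0 := by
        filter_upwards [Metric.ball_mem_nhds (0:ℂ) one_pos] with z hz
        exact hq0cb z (Metric.ball_subset_closedBall hz)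
      have := han.eqOn_zero_of_preconnected_of_eventuallyEq_zero isPreconnected_univ
        (Set.mem_univ (0:ℂ)) hev
      exact fun z => this (Set.mem_univ z)
    have hdz : ∀ j, lam j ≠ 0 → d j = 0 := by
      intro j hj
      have hKj : (starRingEnd ℂ) (lam j) ≠ 0 := by
        intro h
        apply hj
        have := congrArg (starRingEnd ℂ) h
        simpa using this
      have hq := hq0 (((starRingEnd ℂ) (lam j))⁻¹)
      rw [hqdef] at hq
      simp only [] at hq
      have h0 : ∀ i ∈ (Finset.univ : Finset (Fin (m+1))), i ≠ j →
          (d i * ∏ i' ∈ Finset.univ.erase i,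
            (1 - (starRingEnd ℂ) (lam i') * ((starRingEnd ℂ) (lam j))⁻¹)) = 0 := by
        intro i _ hij
        refine mul_eq_zero_of_right _ ?_
        refine Finset.prod_eq_zero (Finset.mem_erase.2 ⟨hij.symm, Finset.mem_univ j⟩) ?_
        rw [mul_inv_cancel₀ hKj, sub_self]
      have h1 : j ∉ (Finset.univ : Finset (Fin (m+1))) →
          (d j * ∏ i' ∈ Finset.univ.erase j,
            (1 - (starRingEnd ℂ) (lam i') * ((starRingEnd ℂ) (lam j))⁻¹)) = 0 :=
        fun hh => absurd (Finset.mem_univ j) hh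
      rw [Finset.sum_eq_single j h0 h1] at hq
      rcases mul_eq_zero.1 hq with h | h
      · exact h
      · exfalso
        rw [Finset.prod_eq_zero_iff] at h
        obtain ⟨i, hi, hzi⟩ := h
        have h2 : (starRingEnd ℂ) (lam i) = (starRingEnd ℂ) (lam j) := by
          have h3 := sub_eq_zero.1 hzi
          field_simp at h3
          linear_combination -h3
        have h4 : lam i = lam j := by
          have := congrArg (starRingEnd ℂ) h2
          simpa using this
        exact (Finset.ne_of_mem_erase hi) (hinj h4)
    have hdz0 : ∀ j, d j = 0 := by
      intro j
      by_cases hj : lam j = 0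
      · have hq := hq0 0
        rw [hqdef] at hq
        simp only [mul_zero, sub_zero, Finset.prod_const_one, mul_one] at hq
        have h0 : ∀ i ∈ (Finset.univ : Finset (Fin (m+1))), i ≠ j → d i = 0 := by
          intro i _ hij
          refine hdz i ?_
          intro h0
          exact hij (hinj (h0.trans hj.symm))
        have h1 : j ∉ (Finset.univ : Finset (Fin (m+1))) → d j = 0 :=
          fun hh => absurd (Finset.mem_univ j) hh
        rw [Finset.sum_eq_single j h0 h1] at hq
        exact hq
      · exact hdz j hj
    apply hcne
    funext j
    have h := hdz0 j
    rw [hddef] at h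
    have := congrArg (starRingEnd ℂ) h
    simpa using this
  · -- then 0 < A, contradiction
    push_neg at hFz
    obtain ⟨z₀, hz₀s, hz₀⟩ := hFz
    have hπ : (0:ℝ) < 2*Real.pi := by positivity
    -- find θc ∈ Ioo 0 (2π) with F (circleMap 0 1 θc) ≠ 0
    obtain ⟨θc, hθc1, hθc2⟩ : ∃ θc, θc ∈ Set.Ioo (0:ℝ) (2*Real.pi)
        ∧ F (circleMap 0 1 θc) ≠ 0 := by
      have hz₀n : ‖z₀‖ = 1 := by
        have := mem_sphere_zero_iff_norm.1 hz₀s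
        exact this
      have hmap : circleMap 0 1 (Complex.arg z₀) = z₀ := by
        rw [circleMap_zero]
        simp only [Complex.ofReal_one, one_mul]
        have := Complex.norm_mul_exp_arg_mul_I z₀
        rwa [hz₀n, Complex.ofReal_one, one_mul] at this
      have harg1 : Complex.arg z₀ ≤ Real.pi := Complex.arg_le_pi z₀
      have harg2 : -Real.pi < Complex.arg z₀ := Complex.neg_pi_lt_arg z₀
      rcases lt_trichotomy (Complex.arg z₀) 0 with hlt | heq | hgt
      · refine ⟨Complex.arg z₀ + 2*Real.pi, ⟨by linarith, by linarith⟩, ?_⟩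
        rw [periodic_circleMap 0 1 (Complex.arg z₀), hmap]
        exact hz₀
      · -- arg = 0, so z₀ = 1 = circleMap 0; use openness near 0
        have h0 : F (circleMap 0 1 0) ≠ 0 := by
          rw [show (0:ℝ) = Complex.arg z₀ from heq.symm, hmap]
          exact hz₀
        have hop : IsOpen {θ : ℝ | F (circleMap 0 1 θ) ≠ 0} :=
          isOpen_compl_singleton.preimage hFc
        obtain ⟨ε, hε, hball⟩ := Metric.isOpen_iff.1 hop 0 h0
        refine ⟨min (ε/2) 1, ⟨by positivity, ?_⟩, ?_⟩
        · have : min (ε/2) 1 ≤ 1 := min_le_right _ _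
          have := Real.pi_gt_three
          linarith
        · refine hball ?_
          rw [Metric.mem_ball, Real.dist_eq, sub_zero, abs_of_pos (by positivity)]
          calc min (ε/2) 1 ≤ ε/2 := min_le_left _ _
            _ < ε := by linarith
      · refine ⟨Complex.arg z₀, ⟨hgt, ?_⟩, ?_⟩
        · have := Real.pi_pos
          linarith
        · rw [hmap]
          exact hz₀
    -- an interval around θc inside (0, 2π) where F ≠ 0
    have hop : IsOpen ({θ : ℝ | F (circleMap 0 1 θ) ≠ 0} ∩ Set.Ioo 0 (2*Real.pi)) :=
      (isOpen_compl_singleton.preimage hFc).inter isOpen_Ioo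
    obtain ⟨ε, hε, hball⟩ := Metric.isOpen_iff.1 hop θc ⟨hθc2, hθc1⟩
    set α := θc - ε/2 with hα
    set β := θc + ε/2 with hβ
    have hsub : Set.Icc α β ⊆ {θ : ℝ | F (circleMap 0 1 θ) ≠ 0} ∩ Set.Ioo 0 (2*Real.pi) := by
      intro x hx
      refine hball ?_
      rw [Metric.mem_ball, Real.dist_eq, abs_sub_lt_iff]
      obtain ⟨h1, h2⟩ := hx
      constructor <;> [skip; skip] <;> simp [hα, hβ] at h1 h2 <;> linarith
    have hαβ : α < β := by rw [hα, hβ]; linarith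
    have hα0 : 0 < α := (hsub ⟨le_refl α, hαβ.le⟩).2.1
    have hβ2 : β < 2*Real.pi := (hsub ⟨hαβ.le, le_refl β⟩).2.2
    have hint : ∀ x y : ℝ, IntervalIntegrable (fun θ => ‖F (circleMap 0 1 θ)‖^2)
        MeasureTheory.volume x y := fun x y => ((hFc.norm).pow 2).intervalIntegrable x y
    have hsplit : A = (∫ θ in (0:ℝ)..α, ‖F (circleMap 0 1 θ)‖^2)
        + ((∫ θ in α..β, ‖F (circleMap 0 1 θ)‖^2)
          + ∫ θ in β..(2*Real.pi), ‖F (circleMap 0 1 θ)‖^2) := by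
      rw [intervalIntegral.integral_add_adjacent_intervals (hint α β) (hint β (2*Real.pi)),
        intervalIntegral.integral_add_adjacent_intervals (hint 0 α) (hint α (2*Real.pi)), hAdef]
    have hpos : 0 < ∫ θ in α..β, ‖F (circleMap 0 1 θ)‖^2 := by
      refine intervalIntegral.intervalIntegral_pos_of_pos_on (hint α β) ?_ hαβ
      intro x hx
      have hmem := hsub ⟨hx.1.le, hx.2.le⟩
      have hne : ‖F (circleMap 0 1 x)‖ ≠ 0 := norm_ne_zero_iff.2 hmem.1
      positivity
    have hnn1 : 0 ≤ ∫ θ in (0:ℝ)..α, ‖F (circleMap 0 1 θ)‖^2 :=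
      intervalIntegral.integral_nonneg hα0.le fun u _ => sq_nonneg _
    have hnn2 : 0 ≤ ∫ θ in β..(2*Real.pi), ‖F (circleMap 0 1 θ)‖^2 :=
      intervalIntegral.integral_nonneg hβ2.le fun u _ => sq_nonneg _
    have hApos : 0 < A := by linarith [hsplit, hpos, hnn1, hnn2]
    linarith


end
end

section
/- Let f ∈ 𝒪(𝔻, D), F ∈ 𝒪(D, 𝔻), and suppose B := F ∘ f is a Blaschke product of degree m. If B₁ is a Blaschke product of degree k, then the map λ ↦ f(B₁(λ)) is (mk+1)-extremal in D. -/
open Complex Metric Set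

noncomputable section

variable {E : Type*} [NormedAddCommGroup E] [NormedSpace ℂ E]

section Stmt2AuxSection
open Polynomial
namespace Stmt2Aux


/-- the conjugate-reflected polynomial at degree `d`. -/
def reflD (d : ℕ) (P : ℂ[X]) : ℂ[X] := (P.map (starRingEnd ℂ)).reflect d

lemma coeff_reflD (d : ℕ) (P : ℂ[X]) (i : ℕ) :
    (reflD d P).coeff i = (starRingEnd ℂ) (P.coeff (revAt d i)) := by
  simp [reflD, coeff_reflect, coeff_map]

lemma natDegree_reflD_le {d : ℕ} {P : ℂ[X]} (h : P.natDegree ≤ d) :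
    (reflD d P).natDegree ≤ d := by
  refine natDegree_le_iff_coeff_eq_zero.mpr fun N hN => ?_
  rw [coeff_reflD, revAt_eq_self_of_lt hN, P.coeff_eq_zero_of_natDegree_lt (lt_of_le_of_lt h hN)]
  simp

lemma reflD_reflD (d : ℕ) (P : ℂ[X]) : reflD d (reflD d P) = P := by
  ext i
  rw [coeff_reflD, coeff_reflD, revAt_invol]
  simp

lemma reflD_sub (d : ℕ) (P Q : ℂ[X]) : reflD d (P - Q) = reflD d P - reflD d Q := by
  ext i; simp [coeff_reflD]

lemma reflD_C_mul (d : ℕ) (a : ℂ) (P : ℂ[X]) :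
    reflD d (C a * P) = C ((starRingEnd ℂ) a) * reflD d P := by
  ext i; simp [coeff_reflD]

lemma reflD_mul {a b : ℕ} {P Q : ℂ[X]} (hP : P.natDegree ≤ a) (hQ : Q.natDegree ≤ b) :
    reflD (a + b) (P * Q) = reflD a P * reflD b Q := by
  rw [reflD, Polynomial.map_mul, reflect_mul _ _ (le_trans natDegree_map_le hP)
    (le_trans natDegree_map_le hQ)]
  rfl

lemma reflD_X_sub_C (a : ℂ) :
    reflD 1 (X - C a) = 1 - C ((starRingEnd ℂ) a) * X := by
  rw [show (X - C a : ℂ[X]) = X - C a from rfl, reflD_sub]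
  have h1 : reflD 1 (X : ℂ[X]) = 1 := by simp [reflD]
  have h2 : reflD 1 (C a : ℂ[X]) = C ((starRingEnd ℂ) a) * X := by
    simp [reflD, reflect_C]
  rw [h1, h2]

lemma reflD_C_sub_X (a : ℂ) :
    reflD 1 (C a - X) = C ((starRingEnd ℂ) a) * X - 1 := by
  have : (C a - X : ℂ[X]) = -(X - C a) := by ring
  rw [this, show -(X - C a) = (0 : ℂ[X]) - (X - C a) by ring, reflD_sub, reflD_X_sub_C]
  have : reflD 1 (0 : ℂ[X]) = 0 := by simp [reflD]
  rw [this]; ring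






lemma reflD_eval_circle {P : ℂ[X]} {d : ℕ} (hdeg : P.natDegree ≤ d) {z : ℂ} (hz : ‖z‖ = 1) :
    (reflD d P).eval z = z ^ d * (starRingEnd ℂ) (P.eval z) := by
  have hz0 : z ≠ 0 := by intro h; rw [h] at hz; simp at hz
  have hmc : (starRingEnd ℂ) z * z = 1 := by
    rw [mul_comm, Complex.mul_conj]
    norm_cast
    rw [Complex.normSq_eq_norm_sq, hz]; norm_num
  have : Invertible ((starRingEnd ℂ) z) := invertibleOfNonzero (by simpa using hz0)
  have hinv : ⅟((starRingEnd ℂ) z) = z := invOf_eq_right_inv hmc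
  have hdm : (P.map (starRingEnd ℂ)).natDegree ≤ d := le_trans natDegree_map_le hdeg
  have h1 := eval₂_reflect_mul_pow (RingHom.id ℂ) ((starRingEnd ℂ) z) d
      (P.map (starRingEnd ℂ)) hdm
  rw [hinv] at h1
  have h2 : eval₂ (RingHom.id ℂ) z ((P.map (starRingEnd ℂ)).reflect d)
      = (reflD d P).eval z := by rw [← eval_map, Polynomial.map_id]; rfl
  have h3 : eval₂ (RingHom.id ℂ) ((starRingEnd ℂ) z) (P.map (starRingEnd ℂ))
      = (starRingEnd ℂ) (P.eval z) := by
    rw [← eval_map, Polynomial.map_id, ← eval₂_at_apply, ← eval_map]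
  rw [h2, h3] at h1
  have hpow : ((starRingEnd ℂ) z) ^ d * z ^ d = 1 := by
    rw [← mul_pow, hmc, one_pow]
  calc (reflD d P).eval z = (reflD d P).eval z * (((starRingEnd ℂ) z) ^ d * z ^ d) := by
        rw [hpow, mul_one]
    _ = ((reflD d P).eval z * ((starRingEnd ℂ) z) ^ d) * z ^ d := by ring
    _ = z ^ d * (starRingEnd ℂ) (P.eval z) := by rw [h1]; ring

lemma norm_reflD_eval_circle {P : ℂ[X]} {d : ℕ} (hdeg : P.natDegree ≤ d) {z : ℂ} (hz : ‖z‖ = 1) :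
    ‖(reflD d P).eval z‖ = ‖P.eval z‖ := by
  rw [reflD_eval_circle hdeg hz]
  simp [hz]


lemma normSq_identity (w u : ℂ) :
    Complex.normSq (1 - (starRingEnd ℂ) w * u) - Complex.normSq (w - u)
      = (1 - Complex.normSq w) * (1 - Complex.normSq u) := by
  simp only [Complex.normSq_apply, Complex.sub_re, Complex.sub_im, Complex.mul_re,
    Complex.mul_im, Complex.one_re, Complex.one_im, Complex.conj_re, Complex.conj_im]
  ring

lemma normSq_norm (z : ℂ) : Complex.normSq z = ‖z‖ ^ 2 := by
  rw [Complex.normSq_eq_norm_sq]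

lemma norm_lt_of_normSq_lt {a b : ℂ} (h : Complex.normSq a < Complex.normSq b) : ‖a‖ < ‖b‖ := by
  rw [normSq_norm, normSq_norm] at h
  nlinarith [norm_nonneg a, norm_nonneg b]

lemma one_sub_conj_mul_ne {w u : ℂ} (hw : ‖w‖ < 1) (hu : ‖u‖ ≤ 1) :
    1 - (starRingEnd ℂ) w * u ≠ 0 := by
  intro h
  have h1 : (starRingEnd ℂ) w * u = 1 := by linear_combination -h
  have : ‖(starRingEnd ℂ) w * u‖ < 1 := by
    rw [norm_mul, RCLike.norm_conj]
    calc ‖w‖ * ‖u‖ ≤ ‖w‖ * 1 := by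
          exact mul_le_mul_of_nonneg_left hu (norm_nonneg w)
      _ < 1 := by simpa using hw
  rw [h1] at this; simp at this

lemma norm_sub_lt_norm_one_sub {w u : ℂ} (hw : ‖w‖ < 1) (hu : ‖u‖ < 1) :
    ‖w - u‖ < ‖1 - (starRingEnd ℂ) w * u‖ := by
  apply norm_lt_of_normSq_lt
  have h := normSq_identity w u
  have hw' : Complex.normSq w < 1 := by rw [normSq_norm]; nlinarith [norm_nonneg w]
  have hu' : Complex.normSq u < 1 := by rw [normSq_norm]; nlinarith [norm_nonneg u]
  nlinarith

lemma mobius_lt {w u : ℂ} (hw : ‖w‖ < 1) (hu : ‖u‖ < 1) :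
    ‖(w - u) / (1 - (starRingEnd ℂ) w * u)‖ < 1 := by
  rw [norm_div, div_lt_one]
  · exact norm_sub_lt_norm_one_sub hw hu
  · exact norm_pos_iff.mpr (one_sub_conj_mul_ne hw hu.le)

lemma norm_one_sub_conj_circle {a z : ℂ} (hz : ‖z‖ = 1) :
    ‖1 - (starRingEnd ℂ) a * z‖ = ‖a - z‖ := by
  have h := normSq_identity a z
  have hz' : Complex.normSq z = 1 := by rw [normSq_norm, hz]; norm_num
  rw [hz'] at h
  simp only [sub_self, mul_zero] at h
  have : Complex.normSq (1 - (starRingEnd ℂ) a * z) = Complex.normSq (a - z) := by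
    linarith
  rw [normSq_norm, normSq_norm] at this
  nlinarith [norm_nonneg (1 - (starRingEnd ℂ) a * z), norm_nonneg (a - z)]

/-- strict maximum principle on the closed unit disc -/
lemma norm_lt_one_on_closedBall {h : ℂ → ℂ}
    (hd : DiffContOnCl ℂ h (ball (0:ℂ) 1))
    (hb : ∀ z ∈ sphere (0:ℂ) 1, ‖h z‖ < 1) :
    ∀ z ∈ closedBall (0:ℂ) 1, ‖h z‖ < 1 := by
  have hco : ContinuousOn (fun z => ‖h z‖) (sphere (0:ℂ) 1) := by
    apply (hd.continuousOn.mono ?_).norm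
    rw [closure_ball (0:ℂ) one_ne_zero]
    exact sphere_subset_closedBall
  have hne : (sphere (0:ℂ) 1).Nonempty := ⟨1, by simp⟩
  obtain ⟨z₀, hz₀, hmax⟩ := (isCompact_sphere (0:ℂ) 1).exists_isMaxOn hne hco
  have hC : ‖h z₀‖ < 1 := hb z₀ hz₀
  intro z hz
  have hzc : z ∈ closure (ball (0:ℂ) 1) := by rwa [closure_ball (0:ℂ) one_ne_zero]
  have := Complex.norm_le_of_forall_mem_frontier_norm_le isBounded_ball hd
    (fun w hw => by
      rw [frontier_ball (0:ℂ) one_ne_zero] at hw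
      exact hmax hw) hzc
  exact lt_of_le_of_lt this hC



lemma norm_eval_le {P : ℂ[X]} {d : ℕ} (hdeg : P.natDegree ≤ d)
    (hQ : ∀ z ∈ closedBall (0:ℂ) 1, (reflD d P).eval z ≠ 0) :
    ∀ z ∈ closedBall (0:ℂ) 1, ‖P.eval z‖ ≤ ‖(reflD d P).eval z‖ := by
  intro z hz
  have hdiff : DifferentiableOn ℂ (fun z => P.eval z / (reflD d P).eval z)
      (closure (ball (0:ℂ) 1)) := by
    rw [closure_ball (0:ℂ) one_ne_zero]
    exact (P.differentiable_aeval.differentiableOn).div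
      ((reflD d P).differentiable_aeval.differentiableOn) hQ
  have hd : DiffContOnCl ℂ (fun z => P.eval z / (reflD d P).eval z) (ball (0:ℂ) 1) :=
    hdiff.diffContOnCl
  have hzc : z ∈ closure (ball (0:ℂ) 1) := by rwa [closure_ball (0:ℂ) one_ne_zero]
  have hb : ∀ w ∈ frontier (ball (0:ℂ) 1),
      ‖P.eval w / (reflD d P).eval w‖ ≤ 1 := by
    intro w hw
    rw [frontier_ball (0:ℂ) one_ne_zero, mem_sphere_zero_iff_norm] at hw
    rw [norm_div, norm_reflD_eval_circle hdeg hw]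
    rcases eq_or_ne (P.eval w) 0 with h | h
    · simp [h]
    · rw [div_self (by simpa using h)]
  have := Complex.norm_le_of_forall_mem_frontier_norm_le isBounded_ball hd hb hzc
  have hQz := hQ z hz
  rw [norm_div, div_le_one (norm_pos_iff.mpr hQz)] at this
  exact this

lemma reflD_prod {ι : Type*} (s : Finset ι) (p : ι → ℂ[X]) (e : ι → ℕ)
    (h : ∀ i ∈ s, (p i).natDegree ≤ e i) :
    reflD (∑ i ∈ s, e i) (∏ i ∈ s, p i) = ∏ i ∈ s, reflD (e i) (p i) := by
  induction s using Finset.cons_induction with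
  | empty => simp [reflD]
  | cons i s his ih =>
    rw [Finset.prod_cons, Finset.sum_cons, Finset.prod_cons,
      reflD_mul (h i (Finset.mem_cons_self i s))
        (le_trans (natDegree_prod_le _ _)
          (Finset.sum_le_sum fun j hj => h j (Finset.mem_cons_of_mem hj))),
      ih fun j hj => h j (Finset.mem_cons_of_mem hj)]



/-- Key lemma: a map holomorphic on a neighbourhood of the closed disc with values in the
open disc cannot agree with a degree-`d` Blaschke-type quotient at `d+1` distinct points. -/
lemma key (d : ℕ) : ∀ (P : ℂ[X]) (ω : ℂ), ‖ω‖ = 1 → P.natDegree ≤ d →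
    (∀ z ∈ closedBall (0:ℂ) 1, (reflD d P).eval z ≠ 0) →
    ∀ (U : Set ℂ) (h : ℂ → ℂ), IsOpen U → closedBall (0:ℂ) 1 ⊆ U →
    DifferentiableOn ℂ h U → (∀ z ∈ closedBall (0:ℂ) 1, ‖h z‖ < 1) →
    ∀ lam : Fin (d+1) → ℂ, Function.Injective lam → (∀ j, ‖lam j‖ < 1) →
    (∀ j, h (lam j) = ω * P.eval (lam j) / (reflD d P).eval (lam j)) → False := by
  induction d with
  | zero =>
    intro P ω hω hdeg hQ U h hU hUsub hh hh1 lam hinj hlam heq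
    obtain ⟨a, ha⟩ := natDegree_eq_zero.mp (Nat.le_zero.mp hdeg)
    have hrefl : reflD 0 (C a) = C ((starRingEnd ℂ) a) := by
      simp [reflD, reflect_C]
    have h0cb : (0:ℂ) ∈ closedBall (0:ℂ) 1 := mem_closedBall_self zero_le_one
    have hane : a ≠ 0 := by
      intro h0
      apply hQ 0 h0cb
      rw [← ha, hrefl, h0]; simp
    have hlamcb : lam 0 ∈ closedBall (0:ℂ) 1 := by
      rw [mem_closedBall_zero_iff]; exact (hlam 0).le
    have := hh1 (lam 0) hlamcb
    rw [heq 0, ← ha, hrefl] at this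
    simp only [eval_C] at this
    rw [norm_div, norm_mul, hω, one_mul, RCLike.norm_conj,
      div_self (norm_ne_zero_iff.mpr hane)] at this
    exact lt_irrefl _ this
  | succ d IH =>
    intro P ω hω hdeg hQ U h hU hUsub hh hh1 lam hinj hlam heq
    set Q : ℂ[X] := reflD (d+1) P with hQdef
    have hωne : ω ≠ 0 := by intro h0; rw [h0] at hω; simp at hω
    have hωc : ω * (starRingEnd ℂ) ω = 1 := by
      rw [Complex.mul_conj]; norm_cast
      rw [Complex.normSq_eq_norm_sq, hω]; norm_num
    have hPle : ∀ z ∈ closedBall (0:ℂ) 1, ‖P.eval z‖ ≤ ‖Q.eval z‖ := norm_eval_le hdeg hQ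
    set l0 := lam 0 with hl0def
    have hl0lt : ‖l0‖ < 1 := hlam 0
    have hl0cb : l0 ∈ closedBall (0:ℂ) 1 := by rw [mem_closedBall_zero_iff]; exact hl0lt.le
    set w := h l0 with hwdef
    have hwlt : ‖w‖ < 1 := hh1 _ hl0cb
    have hQl0 : Q.eval l0 ≠ 0 := hQ _ hl0cb
    have hwval : w = ω * P.eval l0 / Q.eval l0 := heq 0
    -- the transformed Blaschke data
    set P₁ : ℂ[X] := C w * Q - C ω * P with hP₁def
    have hP₁deg : P₁.natDegree ≤ d + 1 := by
      apply le_trans (natDegree_sub_le _ _)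
      simp only [max_le_iff]
      exact ⟨le_trans (natDegree_C_mul_le _ _) (natDegree_reflD_le hdeg),
        le_trans (natDegree_C_mul_le _ _) hdeg⟩
    have hreflP₁ : reflD (d+1) P₁ = C ((starRingEnd ℂ) w) * P - C ((starRingEnd ℂ) ω) * Q := by
      rw [hP₁def, reflD_sub, reflD_C_mul, reflD_C_mul, ← hQdef, reflD_reflD]
    have hQ₁ : ∀ z ∈ closedBall (0:ℂ) 1, (reflD (d+1) P₁).eval z ≠ 0 := by
      intro z hz
      rw [hreflP₁]
      simp only [eval_sub, eval_mul, eval_C]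
      have hQz : Q.eval z ≠ 0 := hQ z hz
      have : ‖(starRingEnd ℂ) w * P.eval z‖ < ‖(starRingEnd ℂ) ω * Q.eval z‖ := by
        rw [norm_mul, norm_mul, RCLike.norm_conj, RCLike.norm_conj, hω, one_mul]
        calc ‖w‖ * ‖P.eval z‖ ≤ ‖w‖ * ‖Q.eval z‖ :=
              mul_le_mul_of_nonneg_left (hPle z hz) (norm_nonneg w)
          _ < 1 * ‖Q.eval z‖ := by
              apply mul_lt_mul_of_pos_right hwlt (norm_pos_iff.mpr hQz)
          _ = ‖Q.eval z‖ := one_mul _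
      intro hc
      rw [sub_eq_zero] at hc
      rw [hc] at this
      exact lt_irrefl _ this
    have hroot : P₁.eval l0 = 0 := by
      rw [hP₁def]
      simp only [eval_sub, eval_mul, eval_C]
      rw [hwval]
      field_simp
      ring
    obtain ⟨P₂, hP₂⟩ : (X - C l0) ∣ P₁ := dvd_iff_isRoot.mpr hroot
    have hP₂deg : P₂.natDegree ≤ d := by
      rcases eq_or_ne P₂ 0 with h0 | h0
      · simp [h0]
      · have hXne : (X - C l0 : ℂ[X]) ≠ 0 := X_sub_C_ne_zero l0
        rw [hP₂, natDegree_mul hXne h0, natDegree_X_sub_C] at hP₁deg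
        omega
    have hsplit : reflD (d+1) P₁ = (1 - C ((starRingEnd ℂ) l0) * X) * reflD d P₂ := by
      rw [hP₂, show d + 1 = 1 + d by ring,
        reflD_mul (by rw [natDegree_X_sub_C] : (X - C l0 : ℂ[X]).natDegree ≤ 1) hP₂deg,
        reflD_X_sub_C]
    have hq2ne : ∀ z ∈ closedBall (0:ℂ) 1, (reflD d P₂).eval z ≠ 0 := by
      intro z hz
      have := hQ₁ z hz
      rw [hsplit, eval_mul] at this
      exact right_ne_zero_of_mul this
    -- the transformed function
    set V : Set ℂ := U ∩ h ⁻¹' (ball (0:ℂ) 1) with hVdef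
    have hVopen : IsOpen V := hh.continuousOn.isOpen_inter_preimage hU isOpen_ball
    have hVsub : closedBall (0:ℂ) 1 ⊆ V := fun z hz =>
      ⟨hUsub hz, by rw [mem_preimage, mem_ball_zero_iff]; exact hh1 z hz⟩
    set g : ℂ → ℂ := fun z => (w - h z) / (1 - (starRingEnd ℂ) w * h z) with hgdef
    have hgdiff : DifferentiableOn ℂ g V := by
      apply DifferentiableOn.div
      · exact (differentiableOn_const w).sub (hh.mono (inter_subset_left))
      · exact (differentiableOn_const 1).sub
          ((differentiableOn_const _).mul (hh.mono (inter_subset_left)))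
      · intro z hz
        exact one_sub_conj_mul_ne hwlt (by
          have := hz.2; rw [mem_preimage, mem_ball_zero_iff] at this; exact this.le)
    have hgl0 : g l0 = 0 := by
      rw [hgdef]; simp [← hwdef]
    have hdslope : DifferentiableOn ℂ (dslope g l0) V :=
      (Complex.differentiableOn_dslope (hVopen.mem_nhds (hVsub hl0cb))).mpr hgdiff
    set h₁ : ℂ → ℂ := fun z => -(1 - (starRingEnd ℂ) l0 * z) * dslope g l0 z with hh₁def
    have hh₁diff : DifferentiableOn ℂ h₁ V := by
      apply DifferentiableOn.mul
      · exact ((differentiableOn_const 1).sub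
          ((differentiableOn_const _).mul differentiableOn_id)).neg
      · exact hdslope
    -- values of h₁ away from l0
    have hval : ∀ z, z ≠ l0 → h₁ z = (1 - (starRingEnd ℂ) l0 * z) * g z / (l0 - z) := by
      intro z hz
      rw [hh₁def]
      simp only
      rw [dslope_of_ne g hz, slope_def_field, hgl0, sub_zero]
      have h3 : z - l0 ≠ 0 := sub_ne_zero.mpr hz
      have h2 : l0 - z ≠ 0 := fun hc => hz (by linear_combination -hc)
      generalize g z = G
      field_simp
      ring
    -- h₁ is strictly bounded by 1 on the closed ball
    have hh₁lt : ∀ z ∈ closedBall (0:ℂ) 1, ‖h₁ z‖ < 1 := by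
      apply norm_lt_one_on_closedBall
      · apply DifferentiableOn.diffContOnCl
        apply hh₁diff.mono
        rw [closure_ball (0:ℂ) one_ne_zero]
        exact hVsub
      · intro z hz
        rw [mem_sphere_zero_iff_norm] at hz
        have hzne : z ≠ l0 := by
          intro hc; rw [hc] at hz; exact absurd hz (by simpa using hl0lt.ne)
        rw [hval z hzne, norm_div, norm_mul, norm_one_sub_conj_circle hz]
        have hLz : ‖l0 - z‖ ≠ 0 := by
          rw [norm_ne_zero_iff, sub_ne_zero]; exact fun hc => hzne hc.symm
        rw [mul_comm (‖l0 - z‖) _, mul_div_assoc, div_self hLz, mul_one]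
        exact mobius_lt hwlt (hh1 z (by rw [mem_closedBall_zero_iff, hz]))
    -- interpolation at the remaining d+1 points
    set lam' : Fin (d+1) → ℂ := fun j => lam j.succ with hlam'def
    have hinj' : Function.Injective lam' := by
      intro i j hij
      have h5 : lam i.succ = lam j.succ := hij
      exact Fin.succ_injective _ (hinj h5)
    have hlam' : ∀ j, ‖lam' j‖ < 1 := fun j => hlam j.succ
    have heq' : ∀ j, h₁ (lam' j) =
        (starRingEnd ℂ) ω * P₂.eval (lam' j) / (reflD d P₂).eval (lam' j) := by
      intro j
      set z := lam' j with hzdef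
      have hzlt : ‖z‖ < 1 := hlam' j
      have hzcb : z ∈ closedBall (0:ℂ) 1 := by rw [mem_closedBall_zero_iff]; exact hzlt.le
      have hzne : z ≠ l0 := by
        intro hc
        have := hinj hc
        exact Fin.succ_ne_zero j this
      have hQz : Q.eval z ≠ 0 := hQ z hzcb
      have hhz : h z = ω * P.eval z / Q.eval z := heq j.succ
      have hdenne : 1 - (starRingEnd ℂ) w * h z ≠ 0 :=
        one_sub_conj_mul_ne hwlt (hh1 z hzcb).le
      have hBv : (reflD (d+1) P₁).eval z = (1 - (starRingEnd ℂ) l0 * z) * (reflD d P₂).eval z := by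
        rw [hsplit]; simp [eval_mul, eval_sub, eval_C]
      have hBvne : (reflD (d+1) P₁).eval z ≠ 0 := hQ₁ z hzcb
      have hq2 : (reflD d P₂).eval z ≠ 0 := hq2ne z hzcb
      have h1Lz : 1 - (starRingEnd ℂ) l0 * z ≠ 0 := one_sub_conj_mul_ne hl0lt hzlt.le
      have hA : P₁.eval z = (z - l0) * P₂.eval z := by rw [hP₂]; simp
      have hA' : P₁.eval z = w * Q.eval z - ω * P.eval z := by
        rw [hP₁def]; simp
      have hBv' : (reflD (d+1) P₁).eval z
          = (starRingEnd ℂ) w * P.eval z - (starRingEnd ℂ) ω * Q.eval z := by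
        rw [hreflP₁]; simp
      -- compute g z
      have hgz : g z = P₁.eval z / (-ω * (reflD (d+1) P₁).eval z) := by
        have hd2 : -ω * (reflD (d+1) P₁).eval z
            = Q.eval z - (starRingEnd ℂ) w * ω * P.eval z := by
          rw [hBv']
          linear_combination (Q.eval z) * hωc
        have hBne : -ω * (reflD (d+1) P₁).eval z ≠ 0 :=
          mul_ne_zero (neg_ne_zero.mpr hωne) hBvne
        rw [hgdef]
        simp only
        rw [div_eq_div_iff hdenne hBne, hhz, hA', hd2]
        field_simp
      rw [hval z hzne, hgz, hA, hBv]
      have hzLne : z - l0 ≠ 0 := sub_ne_zero.mpr hzne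
      have hLzne : l0 - z ≠ 0 := fun hc => hzne (by linear_combination -hc)
      rw [eq_inv_of_mul_eq_one_right hωc]
      field_simp
      ring
    exact IH P₂ ((starRingEnd ℂ) ω) (by simp [hω]) hP₂deg hq2ne V h₁ hVopen hVsub
      hh₁diff hh₁lt lam' hinj' hlam' heq'





lemma blaschke_mem {k : ℕ} (hk : 1 ≤ k) {B : ℂ → ℂ} (hB : IsBlaschke k B)
    {z : ℂ} (hz : z ∈ 𝔻) : B z ∈ 𝔻 := by
  obtain ⟨ω, b, hω, hb, hf⟩ := hB
  have hz' : ‖z‖ < 1 := by rwa [𝔻, mem_ball_zero_iff] at hz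
  rw [𝔻, mem_ball_zero_iff]
  rw [hf z hz, norm_mul, hω, one_mul, norm_prod]
  obtain ⟨k', rfl⟩ : ∃ k', k = k' + 1 := ⟨k - 1, by omega⟩
  rw [Fin.prod_univ_succ]
  have hfac : ∀ i : Fin (k'+1), ‖(b i - z) / (1 - (starRingEnd ℂ) (b i) * z)‖ < 1 := by
    intro i
    exact mobius_lt (by have := hb i; rwa [𝔻, mem_ball_zero_iff] at this) hz'
  calc ‖(b 0 - z) / (1 - (starRingEnd ℂ) (b 0) * z)‖ *
        ∏ i : Fin k', ‖(b i.succ - z) / (1 - (starRingEnd ℂ) (b i.succ) * z)‖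
      ≤ ‖(b 0 - z) / (1 - (starRingEnd ℂ) (b 0) * z)‖ * 1 := by
        apply mul_le_mul_of_nonneg_left _ (norm_nonneg _)
        exact Finset.prod_le_one (fun i _ => norm_nonneg _) (fun i _ => (hfac i.succ).le)
    _ < 1 := by rw [mul_one]; exact hfac 0

lemma blaschke_diff {k : ℕ} {B : ℂ → ℂ} (hB : IsBlaschke k B) :
    DifferentiableOn ℂ B 𝔻 := by
  obtain ⟨ω, b, hω, hb, hf⟩ := hB
  apply DifferentiableOn.congr (f := fun z => ω * ∏ j, (b j - z) / (1 - (starRingEnd ℂ) (b j) * z))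
  · apply DifferentiableOn.const_mul
    apply DifferentiableOn.fun_finsetProd
    intro i _
    apply DifferentiableOn.div
    · exact (differentiableOn_const _).sub differentiableOn_id
    · exact (differentiableOn_const _).sub ((differentiableOn_const _).mul differentiableOn_id)
    · intro z hz
      rw [𝔻, mem_ball_zero_iff] at hz
      exact one_sub_conj_mul_ne (by have := hb i; rwa [𝔻, mem_ball_zero_iff] at this) hz.le
  · intro z hz
    exact hf z hz


lemma compose_data {m k : ℕ} (hm : 1 ≤ m) (hk : 1 ≤ k) {Bc B₁ : ℂ → ℂ}
    (hB : IsBlaschke m Bc) (hB₁ : IsBlaschke k B₁) :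
    ∃ (ωC : ℂ) (Pstar : ℂ[X]), ‖ωC‖ = 1 ∧ Pstar.natDegree ≤ m * k ∧
      (∀ z ∈ closedBall (0:ℂ) 1, (reflD (m*k) Pstar).eval z ≠ 0) ∧
      ∀ z ∈ 𝔻, Bc (B₁ z) = ωC * Pstar.eval z / (reflD (m*k) Pstar).eval z := by
  have hB₁mem : ∀ z ∈ 𝔻, B₁ z ∈ 𝔻 := fun z hz => blaschke_mem hk hB₁ hz
  obtain ⟨ω, a, hω, ha, hfB⟩ := hB
  obtain ⟨ω₁, b, hω₁, hb, hfB₁⟩ := hB₁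
  set P₁ : ℂ[X] := ∏ i : Fin k, (C (b i) - X) with hP₁def
  have hfdeg : ∀ i : Fin k, (C (b i) - X : ℂ[X]).natDegree ≤ 1 := fun i =>
    le_trans (natDegree_sub_le _ _) (by simp)
  have hP₁deg : P₁.natDegree ≤ k := by
    refine le_trans (natDegree_prod_le _ _) (le_trans (Finset.sum_le_sum
      (fun i _ => hfdeg i)) ?_)
    simp
  have hQ₁ : reflD k P₁ = ∏ i : Fin k, (C ((starRingEnd ℂ) (b i)) * X - 1) := by
    have h0 := reflD_prod (Finset.univ : Finset (Fin k)) (fun i => C (b i) - X)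
      (fun _ => 1) (fun i _ => hfdeg i)
    simp only [Finset.sum_const, Finset.card_univ, Fintype.card_fin, smul_eq_mul,
      mul_one] at h0
    rw [hP₁def, h0]
    exact Finset.prod_congr rfl (fun i _ => reflD_C_sub_X (b i))
  have hQ₁ne : ∀ z ∈ closedBall (0:ℂ) 1, (reflD k P₁).eval z ≠ 0 := by
    intro z hz
    rw [mem_closedBall_zero_iff] at hz
    rw [hQ₁, eval_prod]
    rw [Finset.prod_ne_zero_iff]
    intro i _
    simp only [eval_sub, eval_mul, eval_C, eval_X, eval_one]
    intro hc
    exact one_sub_conj_mul_ne (by have := hb i; rwa [𝔻, mem_ball_zero_iff] at this) hz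
      (by linear_combination -hc)
  have hP₁le := norm_eval_le hP₁deg hQ₁ne
  -- value of B₁
  set ν : ℂ := ω₁ * (-1)^k with hνdef
  have hν : ‖ν‖ = 1 := by
    rw [hνdef, norm_mul, hω₁, norm_pow, norm_neg, norm_one, one_pow, one_mul]
  have hνne : ν ≠ 0 := by intro h0; rw [h0] at hν; simp at hν
  have hνc : ν * (starRingEnd ℂ) ν = 1 := by
    rw [Complex.mul_conj]; norm_cast
    rw [Complex.normSq_eq_norm_sq, hν]; norm_num
  have hB₁val : ∀ z ∈ 𝔻, B₁ z = ν * P₁.eval z / (reflD k P₁).eval z := by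
    intro z hz
    have hz' : ‖z‖ < 1 := by rwa [𝔻, mem_ball_zero_iff] at hz
    rw [hfB₁ z hz, hQ₁]
    simp only [hP₁def, eval_prod]
    have hfac : ∀ i : Fin k, (b i - z) / (1 - (starRingEnd ℂ) (b i) * z)
        = (-1) * ((C (b i) - X : ℂ[X]).eval z
            / (C ((starRingEnd ℂ) (b i)) * X - 1 : ℂ[X]).eval z) := by
      intro i
      simp only [eval_sub, eval_mul, eval_C, eval_X, eval_one]
      have hne : 1 - (starRingEnd ℂ) (b i) * z ≠ 0 :=
        one_sub_conj_mul_ne (by have := hb i; rwa [𝔻, mem_ball_zero_iff] at this) hz'.le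
      have hne' : (starRingEnd ℂ) (b i) * z - 1 ≠ 0 := fun hc => hne (by linear_combination -hc)
      rw [mul_div_assoc', div_eq_div_iff hne hne']
      ring
    rw [Finset.prod_congr rfl (fun i _ => hfac i), Finset.prod_mul_distrib,
      Finset.prod_const, Finset.prod_div_distrib]
    simp only [Finset.card_univ, Fintype.card_fin]
    rw [hνdef]
    ring
  -- composed numerator
  set N : Fin m → ℂ[X] := fun j => C (a j) * (reflD k P₁) - C ν * P₁ with hNdef
  have hNdeg : ∀ j, (N j).natDegree ≤ k := by
    intro j
    apply le_trans (natDegree_sub_le _ _)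
    simp only [max_le_iff]
    exact ⟨le_trans (natDegree_C_mul_le _ _) (natDegree_reflD_le hP₁deg),
      le_trans (natDegree_C_mul_le _ _) hP₁deg⟩
  set Pstar : ℂ[X] := ∏ j : Fin m, N j with hPstardef
  have hPstardeg : Pstar.natDegree ≤ m * k := by
    refine le_trans (natDegree_prod_le _ _) (le_trans (Finset.sum_le_sum
      (fun j _ => hNdeg j)) ?_)
    simp [Finset.sum_const, mul_comm]
  have hreflN : ∀ j, reflD k (N j)
      = C ((starRingEnd ℂ) (a j)) * P₁ - C ((starRingEnd ℂ) ν) * (reflD k P₁) := by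
    intro j
    rw [hNdef]
    simp only
    rw [reflD_sub, reflD_C_mul, reflD_C_mul, reflD_reflD]
  have hreflPstar : reflD (m * k) Pstar = ∏ j : Fin m, reflD k (N j) := by
    have h0 := reflD_prod (Finset.univ : Finset (Fin m)) N (fun _ => k) (fun j _ => hNdeg j)
    simp only [Finset.sum_const, Finset.card_univ, Fintype.card_fin, smul_eq_mul] at h0
    rw [hPstardef, h0]
  have hdenne : ∀ (j : Fin m), ∀ z ∈ closedBall (0:ℂ) 1, (reflD k (N j)).eval z ≠ 0 := by
    intro j z hz
    rw [hreflN j]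
    simp only [eval_sub, eval_mul, eval_C]
    have hQz : (reflD k P₁).eval z ≠ 0 := hQ₁ne z hz
    have : ‖(starRingEnd ℂ) (a j) * P₁.eval z‖ < ‖(starRingEnd ℂ) ν * (reflD k P₁).eval z‖ := by
      rw [norm_mul, norm_mul, RCLike.norm_conj, RCLike.norm_conj, hν, one_mul]
      have haj : ‖a j‖ < 1 := by have := ha j; rwa [𝔻, mem_ball_zero_iff] at this
      calc ‖a j‖ * ‖P₁.eval z‖ ≤ ‖a j‖ * ‖(reflD k P₁).eval z‖ :=
            mul_le_mul_of_nonneg_left (hP₁le z hz) (norm_nonneg _)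
        _ < 1 * ‖(reflD k P₁).eval z‖ :=
            mul_lt_mul_of_pos_right haj (norm_pos_iff.mpr hQz)
        _ = _ := one_mul _
    intro hc
    rw [sub_eq_zero] at hc
    rw [hc] at this
    exact lt_irrefl _ this
  have hPstarne : ∀ z ∈ closedBall (0:ℂ) 1, (reflD (m*k) Pstar).eval z ≠ 0 := by
    intro z hz
    rw [hreflPstar, eval_prod, Finset.prod_ne_zero_iff]
    exact fun j _ => hdenne j z hz
  refine ⟨ω * (-(starRingEnd ℂ) ν)^m, Pstar, ?_, hPstardeg, hPstarne, ?_⟩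
  · rw [norm_mul, hω, one_mul, norm_pow, norm_neg, RCLike.norm_conj, hν, one_pow]
  · intro z hz
    have hzcb : z ∈ closedBall (0:ℂ) 1 := by
      rw [𝔻, mem_ball_zero_iff] at hz
      rw [mem_closedBall_zero_iff]; exact hz.le
    have hu : B₁ z ∈ 𝔻 := hB₁mem z hz
    have hu1 : ‖B₁ z‖ < 1 := by rwa [𝔻, mem_ball_zero_iff] at hu
    rw [hfB (B₁ z) hu]
    have hfac : ∀ j : Fin m, (a j - B₁ z) / (1 - (starRingEnd ℂ) (a j) * B₁ z)
        = (-(starRingEnd ℂ) ν) * ((N j).eval z / (reflD k (N j)).eval z) := by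
      intro j
      have haj : ‖a j‖ < 1 := by have := ha j; rwa [𝔻, mem_ball_zero_iff] at this
      have h1 : 1 - (starRingEnd ℂ) (a j) * B₁ z ≠ 0 := one_sub_conj_mul_ne haj hu1.le
      have hQz : (reflD k P₁).eval z ≠ 0 := hQ₁ne z hzcb
      have hdj : (reflD k (N j)).eval z
          = (starRingEnd ℂ) (a j) * P₁.eval z - (starRingEnd ℂ) ν * (reflD k P₁).eval z := by
        rw [hreflN j]; simp
      have hdjne : (reflD k (N j)).eval z ≠ 0 := hdenne j z hzcb
      have hNj : (N j).eval z = a j * (reflD k P₁).eval z - ν * P₁.eval z := by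
        rw [hNdef]; simp
      have huq : B₁ z * (reflD k P₁).eval z = ν * P₁.eval z := by
        rw [hB₁val z hz]; field_simp
      rw [← mul_div_assoc, div_eq_div_iff h1 hdjne, hNj, hdj]
      linear_combination ((starRingEnd ℂ) ν * (1 - (starRingEnd ℂ) (a j) * a j)) * huq
        + ((starRingEnd ℂ) (a j) * P₁.eval z * (B₁ z - a j)) * hνc
    rw [Finset.prod_congr rfl (fun j _ => hfac j), Finset.prod_mul_distrib,
      Finset.prod_const, Finset.prod_div_distrib, ← eval_prod, ← eval_prod, ← hreflPstar,
      ← hPstardef]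
    simp only [Finset.card_univ, Fintype.card_fin]
    ring





end Stmt2Aux
end Stmt2AuxSection

theorem stmt2 {n : ℕ} (D : Set (Fin n → ℂ)) (hDo : IsOpen D) (hDc : IsConnected D)
    (f : ℂ → Fin n → ℂ) (F : (Fin n → ℂ) → ℂ)
    (hf : DifferentiableOn ℂ f 𝔻) (hfD : ∀ z ∈ 𝔻, f z ∈ D)
    (hF : DifferentiableOn ℂ F D) (hFD : ∀ w ∈ D, F w ∈ 𝔻)
    (m k : ℕ) (hm : 1 ≤ m) (hk : 1 ≤ k)
    (hB : IsBlaschke m (fun z => F (f z)))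
    (B₁ : ℂ → ℂ) (hB₁ : IsBlaschke k B₁) :
    IsMExtremal D (m * k + 1) (fun z => f (B₁ z)) := by
  have hB₁mem : ∀ z ∈ 𝔻, B₁ z ∈ 𝔻 := fun z hz => Stmt2Aux.blaschke_mem hk hB₁ hz
  obtain ⟨ωC, Pstar, hωC, hPdeg, hPne, hval⟩ := Stmt2Aux.compose_data hm hk hB hB₁
  refine ⟨?_, fun z hz => hfD _ (hB₁mem z hz), ?_⟩
  · exact hf.comp (Stmt2Aux.blaschke_diff hB₁) (fun z hz => hB₁mem z hz)
  · intro lam hinj hlam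
    rintro ⟨U, g, hUo, hUsub, hg, hgD, hgl⟩
    refine Stmt2Aux.key (m * k) Pstar ωC hωC hPdeg hPne U (fun z => F (g z)) hUo hUsub
      (hF.comp hg (fun z hz => hgD z hz)) ?_ lam hinj ?_ ?_
    · intro z hz
      have := hFD (g z) (hgD z (hUsub hz))
      rwa [𝔻, mem_ball_zero_iff] at this
    · intro j
      have := hlam j
      rwa [𝔻, mem_ball_zero_iff] at this
    · intro j
      show F (g (lam j)) = _
      rw [hgl j]
      exact hval (lam j) (hlam j)

end
end

section
/- Let ℛ be a bounded, convex, balanced domain in ℂⁿ on which the group of holomorphic automorphisms acts transitively (e.g. a classical Cartan domain). Then every weak m-extremal map f : 𝔻 → ℛ is a proper map, i.e. μ_ℛ(f(λ)) → 1 as |λ| → 1, where μ_ℛ is the Minkowski functional of ℛ. -/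
open Complex Metric Set

noncomputable section

variable {E : Type*} [NormedAddCommGroup E] [NormedSpace ℂ E]

section AuxProofs
open Topology

def mob (a z : ℂ) : ℂ := (a - z) / (1 - (starRingEnd ℂ) a * z)

variable {n : ℕ} {R : Set (Fin n → ℂ)}

lemma real_smul_eq (r : ℝ) (x : Fin n → ℂ) : r • x = ((r : ℂ)) • x := by
  funext i; simp [Pi.smul_apply, Complex.real_smul]

lemma zero_mem_of_bal (hbal : Balanced ℂ R) (hne : R.Nonempty) : (0 : Fin n → ℂ) ∈ R := by
  obtain ⟨x, hx⟩ := hne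
  have h := hbal 0 (by simp)
  exact h ⟨x, hx, by simp⟩

lemma exists_ball_sub (hRo : IsOpen R) (h0 : (0 : Fin n → ℂ) ∈ R) :
    ∃ δ > 0, Metric.ball (0 : Fin n → ℂ) δ ⊆ R := by
  rcases Metric.isOpen_iff.1 hRo 0 h0 with ⟨δ, hδ, hsub⟩
  exact ⟨δ, hδ, hsub⟩

lemma minkSet_nonempty (hRo : IsOpen R) (h0 : (0 : Fin n → ℂ) ∈ R) (w : Fin n → ℂ) :
    ∃ t : ℝ, 0 < t ∧ ((t : ℂ))⁻¹ • w ∈ R := by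
  obtain ⟨δ, hδ, hsub⟩ := exists_ball_sub hRo h0
  refine ⟨(‖w‖ + 1) / δ, by positivity, hsub ?_⟩
  rw [mem_ball_zero_iff, norm_smul]
  have h1 : ‖((((‖w‖ + 1) / δ : ℝ) : ℂ))⁻¹‖ = δ / (‖w‖ + 1) := by
    rw [norm_inv, Complex.norm_real, Real.norm_eq_abs, abs_of_pos (by positivity), inv_div]
  rw [h1]
  calc δ / (‖w‖ + 1) * ‖w‖ < δ / (‖w‖ + 1) * (‖w‖ + 1) := by
        apply mul_lt_mul_of_pos_left (by linarith) (by positivity)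
    _ = δ := by field_simp

lemma mink_le' (w : Fin n → ℂ) {t : ℝ} (ht : 0 < t) (hmem : ((t : ℂ))⁻¹ • w ∈ R) :
    mink R w ≤ t :=
  csInf_le ⟨0, fun x hx => hx.1.le⟩ ⟨ht, hmem⟩

lemma le_mink' (hRo : IsOpen R) (h0 : (0 : Fin n → ℂ) ∈ R) (w : Fin n → ℂ) {c : ℝ}
    (h : ∀ t : ℝ, 0 < t → ((t : ℂ))⁻¹ • w ∈ R → c ≤ t) : c ≤ mink R w := by
  obtain ⟨t0, ht0, hm⟩ := minkSet_nonempty hRo h0 w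
  refine le_csInf ⟨t0, ⟨ht0, hm⟩⟩ (fun t ht => h t ht.1 ht.2)

lemma mink_lt_extract (hRo : IsOpen R) (h0 : (0 : Fin n → ℂ) ∈ R) {w : Fin n → ℂ} {s : ℝ}
    (h : mink R w < s) : ∃ t : ℝ, 0 < t ∧ ((t : ℂ))⁻¹ • w ∈ R ∧ t < s := by
  obtain ⟨t0, ht0, hm⟩ := minkSet_nonempty hRo h0 w
  obtain ⟨t, ht, hts⟩ := exists_lt_of_csInf_lt
    (s := {t : ℝ | 0 < t ∧ ((t : ℂ))⁻¹ • w ∈ R}) ⟨t0, ⟨ht0, hm⟩⟩ h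
  exact ⟨t, ht.1, ht.2, hts⟩

lemma mink_nonneg' (hRo : IsOpen R) (h0 : (0 : Fin n → ℂ) ∈ R) (w : Fin n → ℂ) :
    0 ≤ mink R w :=
  le_mink' hRo h0 w (fun t ht _ => ht.le)

lemma smul_closure_mem (hRo : IsOpen R) (hconv : Convex ℝ R) (hbal : Balanced ℂ R)
    (h0 : (0 : Fin n → ℂ) ∈ R) {v : Fin n → ℂ} (hv : v ∈ closure R) {s : ℝ}
    (hs0 : 0 ≤ s) (hs1 : s < 1) : ((s : ℂ)) • v ∈ R := by
  rcases eq_or_lt_of_le hs0 with h | h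
  · simp [← h, h0]
  have h1s : (0:ℝ) < 1 - s := by linarith
  obtain ⟨δ, hδ, hsub⟩ := exists_ball_sub hRo h0
  obtain ⟨x, hx, hdist⟩ := Metric.mem_closure_iff.1 hv (δ * (1 - s) / s)
    (div_pos (mul_pos hδ h1s) h)
  set y : Fin n → ℂ := ((s / (1 - s) : ℝ) : ℂ) • (v - x) with hy
  have hyR : y ∈ R := by
    apply hsub
    rw [mem_ball_zero_iff, hy, norm_smul, Complex.norm_real, Real.norm_eq_abs,
      abs_of_pos (div_pos h h1s)]
    have hvx : ‖v - x‖ < δ * (1 - s) / s := by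
      rwa [dist_eq_norm] at hdist
    calc s / (1 - s) * ‖v - x‖ < s / (1 - s) * (δ * (1 - s) / s) := by
          apply mul_lt_mul_of_pos_left hvx (div_pos h h1s)
      _ = δ := by field_simp
  have hc := hconv hx hyR hs0 (by linarith : (0:ℝ) ≤ 1 - s) (by ring)
  have : s • x + (1 - s) • y = ((s : ℂ)) • v := by
    rw [real_smul_eq, real_smul_eq, hy, smul_smul]
    have : (((1 - s : ℝ)) : ℂ) * ((s / (1 - s) : ℝ) : ℂ) = (s : ℂ) := by
      have h1sc : ((1 - s : ℝ) : ℂ) ≠ 0 := by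
        simp only [ne_eq, Complex.ofReal_eq_zero]; linarith
      push_cast at h1sc ⊢
      field_simp
    rw [this, smul_sub]
    abel
  rwa [this] at hc

lemma mink_le_uniform (hRo : IsOpen R) {w₀ : Fin n → ℂ} (hw : w₀ ∈ R) :
    ∃ t₀ δ : ℝ, t₀ < 1 ∧ 0 < t₀ ∧ 0 < δ ∧ ∀ x : Fin n → ℂ, ‖x - w₀‖ < δ → mink R x ≤ t₀ := by
  have hc : ContinuousAt (fun t : ℝ => ((t : ℂ))⁻¹ • w₀) 1 := by
    apply ContinuousAt.fun_smul
    · exact (Complex.continuous_ofReal.continuousAt).inv₀ (by simp)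
    · exact continuousAt_const
  have h1 : (fun t : ℝ => ((t : ℂ))⁻¹ • w₀) 1 ∈ R := by simpa using hw
  obtain ⟨ε, hε, hball⟩ := Metric.mem_nhds_iff.1 (hc.preimage_mem_nhds (hRo.mem_nhds h1))
  set t₀ : ℝ := 1 - min (ε / 2) (1 / 2) with ht₀def
  have hmin : 0 < min (ε / 2) (1 / 2) := lt_min (by positivity) (by norm_num)
  have ht₀1 : t₀ < 1 := by simp [ht₀def]; linarith
  have ht₀0 : 0 < t₀ := by
    have : min (ε / 2) (1 / 2) ≤ 1 / 2 := min_le_right _ _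
    simp only [ht₀def]; linarith
  have hmem : ((t₀ : ℂ))⁻¹ • w₀ ∈ R := by
    apply hball
    rw [mem_ball]
    simp only [Real.dist_eq, ht₀def]
    rw [abs_of_nonpos (by linarith [hmin])]
    have : min (ε / 2) (1 / 2) ≤ ε / 2 := min_le_left _ _
    linarith
  -- openness around (t₀)⁻¹ • w₀
  obtain ⟨δ₁, hδ₁, hsub⟩ := Metric.isOpen_iff.1 hRo _ hmem
  refine ⟨t₀, t₀ * δ₁, ht₀1, ht₀0, by positivity, fun x hx => ?_⟩
  apply mink_le' x ht₀0
  apply hsub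
  rw [mem_ball, dist_eq_norm, ← smul_sub, norm_smul, norm_inv, Complex.norm_real,
    Real.norm_eq_abs, abs_of_pos ht₀0]
  rw [inv_mul_lt_iff₀ ht₀0]
  linarith [hx]


lemma normSq_lt_one_iff {w : ℂ} : Complex.normSq w < 1 ↔ ‖w‖ < 1 := by
  rw [← Complex.sq_norm]
  constructor
  · intro h; nlinarith [norm_nonneg w]
  · intro h; nlinarith [norm_nonneg w]

lemma normSq_le_one_iff {w : ℂ} : Complex.normSq w ≤ 1 ↔ ‖w‖ ≤ 1 := by
  rw [← Complex.sq_norm]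
  constructor
  · intro h; nlinarith [norm_nonneg w]
  · intro h; nlinarith [norm_nonneg w]

lemma mob_den_ne {a z : ℂ} (ha : ‖a‖ < 1) (hz : ‖z‖ ≤ 1) :
    1 - (starRingEnd ℂ) a * z ≠ 0 := by
  intro h
  have h1 : (1 : ℂ) = (starRingEnd ℂ) a * z := by linear_combination h
  have h2 : (1 : ℝ) = ‖(starRingEnd ℂ) a * z‖ := by rw [← h1]; simp
  rw [norm_mul, RCLike.norm_conj] at h2
  nlinarith [norm_nonneg a, norm_nonneg z]

lemma mob_identity (a z : ℂ) :
    Complex.normSq (1 - (starRingEnd ℂ) a * z) - Complex.normSq (a - z)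
      = (1 - Complex.normSq a) * (1 - Complex.normSq z) := by
  simp only [Complex.normSq_apply, Complex.sub_re, Complex.sub_im, Complex.mul_re,
    Complex.mul_im, Complex.conj_re, Complex.conj_im, Complex.one_re, Complex.one_im]
  ring

lemma normSq_mob (a z : ℂ) (h : 1 - (starRingEnd ℂ) a * z ≠ 0) :
    Complex.normSq (mob a z)
      = Complex.normSq (a - z) / Complex.normSq (1 - (starRingEnd ℂ) a * z) := by
  rw [mob, map_div₀]

lemma mob_norm_lt {a z : ℂ} (ha : ‖a‖ < 1) (hz : ‖z‖ < 1) : ‖mob a z‖ < 1 := by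
  have hd := mob_den_ne ha hz.le
  have hdpos : 0 < Complex.normSq (1 - (starRingEnd ℂ) a * z) := Complex.normSq_pos.2 hd
  rw [← normSq_lt_one_iff, normSq_mob a z hd, div_lt_one hdpos]
  have h1 : Complex.normSq a < 1 := normSq_lt_one_iff.2 ha
  have h2 : Complex.normSq z < 1 := normSq_lt_one_iff.2 hz
  nlinarith [mob_identity a z]

lemma mob_norm_le {a z : ℂ} (ha : ‖a‖ < 1) (hz : ‖z‖ ≤ 1) : ‖mob a z‖ ≤ 1 := by
  have hd := mob_den_ne ha hz
  have hdpos : 0 < Complex.normSq (1 - (starRingEnd ℂ) a * z) := Complex.normSq_pos.2 hd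
  rw [← normSq_le_one_iff, normSq_mob a z hd, div_le_one hdpos]
  have h1 : Complex.normSq a < 1 := normSq_lt_one_iff.2 ha
  have h2 : Complex.normSq z ≤ 1 := normSq_le_one_iff.2 hz
  nlinarith [mob_identity a z]

lemma mob_self (a : ℂ) : mob a a = 0 := by simp [mob]

lemma one_sub_conj_mul_self_ne {a : ℂ} (ha : ‖a‖ < 1) : 1 - (starRingEnd ℂ) a * a ≠ 0 :=
  mob_den_ne ha ha.le

lemma mob_invol {a z : ℂ} (ha : ‖a‖ < 1) (hd : 1 - (starRingEnd ℂ) a * z ≠ 0) :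
    mob a (mob a z) = z := by
  have hna := one_sub_conj_mul_self_ne ha
  have hd' : 1 - z * (starRingEnd ℂ) a ≠ 0 := by rwa [mul_comm]
  have hna' : 1 - a * (starRingEnd ℂ) a ≠ 0 := by rwa [mul_comm]
  have key : 1 - (starRingEnd ℂ) a * mob a z
      = (1 - (starRingEnd ℂ) a * a) / (1 - (starRingEnd ℂ) a * z) := by
    rw [mob]; field_simp; ring
  rw [show mob a (mob a z) = (a - mob a z) / (1 - (starRingEnd ℂ) a * mob a z) from rfl,
    key, show mob a z = (a - z) / (1 - (starRingEnd ℂ) a * z) from rfl]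
  field_simp
  ring

lemma mob_diffOn (a : ℂ) :
    DifferentiableOn ℂ (mob a) {z | 1 - (starRingEnd ℂ) a * z ≠ 0} := by
  apply DifferentiableOn.div
  · exact (differentiableOn_const a).sub differentiableOn_id
  · exact (differentiableOn_const 1).sub
      ((differentiableOn_const _).mul differentiableOn_id)
  · exact fun z hz => hz

lemma isOpen_mob_dom (a : ℂ) : IsOpen {z : ℂ | 1 - (starRingEnd ℂ) a * z ≠ 0} := by
  have : Continuous (fun z : ℂ => 1 - (starRingEnd ℂ) a * z) := by continuity
  exact isOpen_compl_singleton.preimage this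

lemma mob_den_normSq_lower {a z : ℂ} (ha : ‖a‖ < 1) (hz : ‖z‖ ≤ 1) :
    (1 - ‖a‖) ^ 2 ≤ Complex.normSq (1 - (starRingEnd ℂ) a * z) := by
  have h1 : 1 - ‖a‖ ≤ ‖(1 : ℂ) - (starRingEnd ℂ) a * z‖ := by
    have := norm_sub_norm_le (1 : ℂ) ((starRingEnd ℂ) a * z)
    have h2 : ‖(starRingEnd ℂ) a * z‖ ≤ ‖a‖ := by
      rw [norm_mul, RCLike.norm_conj]
      nlinarith [norm_nonneg a, norm_nonneg z]
    simp only [norm_one] at this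
    linarith
  have h3 : ‖(1 : ℂ) - (starRingEnd ℂ) a * z‖ ^ 2
      = Complex.normSq (1 - (starRingEnd ℂ) a * z) := by
    rw [Complex.sq_norm]
  nlinarith [norm_nonneg ((1 : ℂ) - (starRingEnd ℂ) a * z)]

lemma mob_normSq_lower {a z : ℂ} (ha : ‖a‖ < 1) (hz : ‖z‖ ≤ 1) :
    1 - Complex.normSq (mob a z)
      ≤ (1 - Complex.normSq a) / (1 - ‖a‖) ^ 2 * (1 - Complex.normSq z) := by
  have hd := mob_den_ne ha hz
  have hdpos : 0 < Complex.normSq (1 - (starRingEnd ℂ) a * z) := Complex.normSq_pos.2 hd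
  have hden := mob_den_normSq_lower ha hz
  have hzz : Complex.normSq z ≤ 1 := normSq_le_one_iff.2 hz
  have haa : Complex.normSq a < 1 := normSq_lt_one_iff.2 ha
  have heq : 1 - Complex.normSq (mob a z)
      = (1 - Complex.normSq a) * (1 - Complex.normSq z)
        / Complex.normSq (1 - (starRingEnd ℂ) a * z) := by
    rw [normSq_mob a z hd]
    rw [eq_div_iff hdpos.ne', sub_mul, div_mul_cancel₀ _ hdpos.ne']
    linear_combination mob_identity a z
  have ha2 : (0:ℝ) < (1 - ‖a‖)^2 := by nlinarith
  calc 1 - Complex.normSq (mob a z)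
      = (1 - Complex.normSq a) * (1 - Complex.normSq z)
        / Complex.normSq (1 - (starRingEnd ℂ) a * z) := heq
    _ ≤ (1 - Complex.normSq a) * (1 - Complex.normSq z) / (1 - ‖a‖) ^ 2 := by
        apply div_le_div_of_nonneg_left _ ha2 hden
        nlinarith
    _ = (1 - Complex.normSq a) / (1 - ‖a‖) ^ 2 * (1 - Complex.normSq z) := by ring


lemma re_extend (g : (Fin n → ℂ) →L[ℝ] ℝ) (x : Fin n → ℂ) :
    ((g.extendTo𝕜' x : ℂ)).re = g x := by
  exact StrongDual.re_extendRCLike_apply (𝕜 := ℂ) g x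

lemma norm_extend_le {C : Set (Fin n → ℂ)} (hC : Balanced ℂ C) (g : (Fin n → ℂ) →L[ℝ] ℝ)
    {u : ℝ} (hu : 0 ≤ u) (hb : ∀ w ∈ C, g w ≤ u) :
    ∀ w ∈ C, ‖(g.extendTo𝕜' w : ℂ)‖ ≤ u := by
  intro w hw
  set L : (Fin n → ℂ) →L[ℂ] ℂ := g.extendTo𝕜' with hL
  rcases eq_or_ne (L w) 0 with h | h
  · simp [h, hu]
  set c : ℂ := (‖L w‖ : ℂ) / L w with hc
  have hc1 : ‖c‖ = 1 := by
    rw [hc, norm_div, Complex.norm_real, Real.norm_eq_abs, _root_.abs_of_nonneg (norm_nonneg _),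
      div_self (norm_ne_zero_iff.2 h)]
  have hcw : c • w ∈ C := hC.smul_mem hc1.le hw
  have hLc : L (c • w) = (‖L w‖ : ℂ) := by
    rw [map_smul, smul_eq_mul, hc, div_mul_cancel₀ _ h]
  have : ‖L w‖ = (L (c • w)).re := by rw [hLc]; simp
  rw [this, hL, re_extend]
  exact hb _ hcw

lemma norm_extend_lt {C : Set (Fin n → ℂ)} (hC : Balanced ℂ C) (g : (Fin n → ℂ) →L[ℝ] ℝ)
    {u : ℝ} (hu : 0 < u) (hb : ∀ w ∈ C, g w < u) :
    ∀ w ∈ C, ‖(g.extendTo𝕜' w : ℂ)‖ < u := by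
  intro w hw
  set L : (Fin n → ℂ) →L[ℂ] ℂ := g.extendTo𝕜' with hL
  rcases eq_or_ne (L w) 0 with h | h
  · simp only [hL] at h; rw [h]; simpa using hu
  set c : ℂ := (‖L w‖ : ℂ) / L w with hc
  have hc1 : ‖c‖ = 1 := by
    rw [hc, norm_div, Complex.norm_real, Real.norm_eq_abs, _root_.abs_of_nonneg (norm_nonneg _),
      div_self (norm_ne_zero_iff.2 h)]
  have hcw : c • w ∈ C := hC.smul_mem hc1.le hw
  have hLc : L (c • w) = (‖L w‖ : ℂ) := by
    rw [map_smul, smul_eq_mul, hc, div_mul_cancel₀ _ h]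
  have : ‖L w‖ = (L (c • w)).re := by rw [hLc]; simp
  rw [show ‖(g.extendTo𝕜' w : ℂ)‖ = ‖L w‖ from rfl, this, hL, re_extend]
  exact hb _ hcw

/-- Separation of a point outside `closure R`, with strict bound. -/
lemma exists_sep_closed (hconv : Convex ℝ R) (hbal : Balanced ℂ R)
    (h0 : (0 : Fin n → ℂ) ∈ R) {p : Fin n → ℂ} (hp : p ∉ closure R) :
    ∃ (L : (Fin n → ℂ) →L[ℂ] ℂ) (u : ℝ), 0 < u ∧ u < (L p).re ∧
      ∀ w ∈ closure R, ‖L w‖ < u := by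
  obtain ⟨g, u, hlt, hgp⟩ :=
    geometric_hahn_banach_closed_point hconv.closure isClosed_closure hp
  have hu : 0 < u := by
    have := hlt 0 (subset_closure h0)
    simpa using this
  refine ⟨g.extendTo𝕜', u, hu, ?_, norm_extend_lt hbal.closure g hu hlt⟩
  rw [re_extend]; exact hgp

/-- Separation of a point outside open `R`, with bound over `closure R`. -/
lemma exists_sep_open (hRo : IsOpen R) (hconv : Convex ℝ R) (hbal : Balanced ℂ R)
    (h0 : (0 : Fin n → ℂ) ∈ R) {p : Fin n → ℂ} (hp : p ∉ R) :
    ∃ (L : (Fin n → ℂ) →L[ℂ] ℂ) (u : ℝ), 0 < u ∧ (L p).re = u ∧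
      ∀ w ∈ closure R, ‖L w‖ ≤ u := by
  obtain ⟨g, hlt⟩ := geometric_hahn_banach_open_point hconv hRo hp
  set u : ℝ := g p with hudef
  have hu : 0 < u := by have := hlt 0 h0; simpa using this
  have hcl : ∀ w ∈ closure R, g w ≤ u := by
    intro w hw
    have hsub : closure R ⊆ {x | g x ≤ u} := by
      apply closure_minimal (fun a ha => (hlt a ha).le)
      exact isClosed_le g.continuous continuous_const
    exact hsub hw
  exact ⟨g.extendTo𝕜', u, hu, re_extend g p, norm_extend_le hbal.closure g hu.le hcl⟩

lemma mink_smul_lower (hRo : IsOpen R) (hbal : Balanced ℂ R)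
    (h0 : (0 : Fin n → ℂ) ∈ R) (lz : ℂ) (w : Fin n → ℂ) :
    ‖lz‖ * mink R w ≤ mink R (lz • w) := by
  rcases eq_or_ne lz 0 with h | h
  · simp [h, mink_nonneg' hRo h0]
  apply le_mink' hRo h0
  intro t ht hmem
  have hlz : (0:ℝ) < ‖lz‖ := norm_pos_iff.2 h
  have hc1 : ‖(‖lz‖ : ℂ) / lz‖ = 1 := by
    rw [norm_div, Complex.norm_real, Real.norm_eq_abs, _root_.abs_of_nonneg (norm_nonneg _),
      div_self (norm_ne_zero_iff.2 h)]
  have hmem2 : (((t / ‖lz‖ : ℝ) : ℂ))⁻¹ • w ∈ R := by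
    have hin := hbal.smul_mem hc1.le hmem
    rw [smul_smul, smul_smul] at hin
    have h2 : ((t : ℝ) : ℂ) ≠ 0 := by
      simp only [ne_eq, Complex.ofReal_eq_zero]; exact ne_of_gt ht
    have h3 : (‖lz‖ : ℂ) ≠ 0 := by
      simp only [ne_eq, Complex.ofReal_eq_zero]; exact ne_of_gt hlz
    have hsc : (((t / ‖lz‖ : ℝ) : ℂ))⁻¹ = (‖lz‖ : ℂ) / lz * ((t : ℂ))⁻¹ * lz := by
      push_cast
      field_simp
    rwa [hsc]
  have := mink_le' w (div_pos ht hlz) hmem2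
  rw [le_div_iff₀ hlz] at this
  linarith [this]


lemma D_mem_nhds : 𝔻 ∈ 𝓝 (0 : ℂ) := isOpen_ball.mem_nhds (mem_ball_self one_pos)

lemma smul_dslope_eq {F : ℂ → Fin n → ℂ} (hF0 : F 0 = 0) (z : ℂ) :
    z • dslope F 0 z = F z := by
  have := sub_smul_dslope F 0 z
  simpa [hF0] using this

/-- Schwarz: the dslope of a map `𝔻 → R` vanishing at the origin takes values in `closure R`. -/
lemma dslope_mem_closure (hRo : IsOpen R) (hconv : Convex ℝ R) (hbal : Balanced ℂ R)
    (h0 : (0 : Fin n → ℂ) ∈ R) {F : ℂ → Fin n → ℂ} (hdF : DifferentiableOn ℂ F 𝔻)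
    (hmaps : ∀ z ∈ 𝔻, F z ∈ R) (hF0 : F 0 = 0) :
    ∀ z ∈ 𝔻, dslope F 0 z ∈ closure R := by
  have hne : ∀ z ∈ 𝔻, z ≠ 0 → dslope F 0 z ∈ closure R := by
    intro z hz hz0
    by_contra hp
    obtain ⟨L, u, hu, hup, hbound⟩ := exists_sep_closed hconv hbal h0 hp
    set h : ℂ → ℂ := fun w => L (F w) with hh
    have hdh : DifferentiableOn ℂ h (ball 0 1) :=
      L.differentiable.comp_differentiableOn hdF
    have hh0 : h 0 = 0 := by simp [hh, hF0]
    have hmapsh : MapsTo h (ball 0 1) (ball (h 0) u) := by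
      intro w hw
      rw [hh0, mem_ball_zero_iff]
      exact hbound _ (subset_closure (hmaps w hw))
    have hz' : z ∈ ball (0 : ℂ) 1 := hz
    have hdist := Complex.dist_le_div_mul_dist_of_mapsTo_ball hdh (hmapsh.mono_right ball_subset_closedBall) hz'
    rw [hh0, dist_zero_right, dist_zero_right, div_one] at hdist
    simp only [hh] at hdist
    have hFz : L (F z) = z * L (dslope F 0 z) := by
      rw [← smul_dslope_eq hF0 z, map_smul, smul_eq_mul]
    rw [hFz, norm_mul] at hdist
    have hz0' : (0:ℝ) < ‖z‖ := norm_pos_iff.2 hz0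
    have hL : ‖L (dslope F 0 z)‖ ≤ u := by
      nlinarith [hdist, norm_nonneg (L (dslope F 0 z))]
    have : u < ‖L (dslope F 0 z)‖ :=
      lt_of_lt_of_le hup (Complex.re_le_norm _)
    linarith
  intro z hz
  rcases eq_or_ne z 0 with rfl | hz0
  · -- continuity argument
    have hcont : ContinuousOn (dslope F 0) 𝔻 :=
      ((Complex.differentiableOn_dslope D_mem_nhds).2 hdF).continuousOn
    have h0cl : (0 : ℂ) ∈ closure (𝔻 \ {0}) := by
      rw [Metric.mem_closure_iff]
      intro ε hε
      refine ⟨(((min ε 1) / 2 : ℝ) : ℂ), ⟨?_, ?_⟩, ?_⟩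
      · show (((min ε 1) / 2 : ℝ) : ℂ) ∈ Metric.ball (0:ℂ) 1
        rw [mem_ball_zero_iff, Complex.norm_real, Real.norm_eq_abs,
          _root_.abs_of_pos (by positivity)]
        have : min ε 1 ≤ 1 := min_le_right _ _
        linarith
      · simp only [mem_singleton_iff, Complex.ofReal_eq_zero]
        positivity
      · rw [dist_comm, dist_zero_right, Complex.norm_real, Real.norm_eq_abs,
          _root_.abs_of_pos (by positivity)]
        have : min ε 1 ≤ ε := min_le_left _ _
        linarith
    have hcw : ContinuousWithinAt (dslope F 0) (𝔻 \ {0}) 0 :=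
      (hcont 0 (mem_ball_self one_pos)).mono diff_subset
    have himg := hcw.mem_closure_image h0cl
    refine closure_minimal ?_ isClosed_closure himg
    rintro w ⟨x, ⟨hx1, hx2⟩, rfl⟩
    exact hne x hx1 hx2
  · exact hne z hz hz0

/-- Case A: if the dslope hits the boundary, `mink R (F z) ≥ ‖z‖`. -/
lemma caseA_bound (hRo : IsOpen R) (hconv : Convex ℝ R) (hbal : Balanced ℂ R)
    (h0 : (0 : Fin n → ℂ) ∈ R) {F : ℂ → Fin n → ℂ} (hdF : DifferentiableOn ℂ F 𝔻)
    (hmaps : ∀ z ∈ 𝔻, F z ∈ R) (hF0 : F 0 = 0) {z₀ : ℂ} (hz₀ : z₀ ∈ 𝔻)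
    (hb : dslope F 0 z₀ ∉ R) :
    ∀ z ∈ 𝔻, ‖z‖ ≤ mink R (F z) := by
  obtain ⟨L, u, hu, hre, hbound⟩ := exists_sep_open hRo hconv hbal h0 hb
  have hψd : DifferentiableOn ℂ (dslope F 0) 𝔻 :=
    (Complex.differentiableOn_dslope D_mem_nhds).2 hdF
  have hψcl := dslope_mem_closure hRo hconv hbal h0 hdF hmaps hF0
  set h : ℂ → ℂ := fun w => L (dslope F 0 w) with hh
  have hdh : DifferentiableOn ℂ h 𝔻 := L.differentiable.comp_differentiableOn hψd
  have hble : ∀ w ∈ 𝔻, ‖h w‖ ≤ u := fun w hw => hbound _ (hψcl w hw)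
  have hmax : IsMaxOn (norm ∘ h) 𝔻 z₀ := by
    intro w hw
    have h1 : u ≤ ‖h z₀‖ := by
      rw [← hre]
      exact Complex.re_le_norm _
    exact le_trans (hble w hw) h1
  have heq := Complex.eqOn_of_isPreconnected_of_isMaxOn_norm
    (convex_ball (0:ℂ) 1).isPreconnected isOpen_ball hdh hz₀ hmax
  have hnz : ‖h z₀‖ = u := le_antisymm (hble z₀ hz₀) (by
    rw [← hre]
    exact Complex.re_le_norm _)
  intro z hz
  apply le_mink' hRo h0
  intro t ht hmem
  have hLF : L (F z) = z * h z₀ := by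
    have hzeq : h z = h z₀ := heq hz
    rw [← smul_dslope_eq hF0 z, map_smul, smul_eq_mul,
      show L (dslope F 0 z) = h z from rfl, hzeq]
  have hmem' : ‖L (((t:ℝ) : ℂ)⁻¹ • F z)‖ ≤ u := hbound _ (subset_closure hmem)
  rw [map_smul, norm_smul, hLF, norm_mul, hnz] at hmem'
  rw [norm_inv, Complex.norm_real, Real.norm_eq_abs, _root_.abs_of_pos ht] at hmem'
  have h2 : t⁻¹ * (‖z‖ * u) ≤ u := hmem'
  rw [inv_mul_le_iff₀ ht] at h2
  have h3 : ‖z‖ * u ≤ t * u := h2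
  exact le_of_mul_le_mul_right (by rwa [mul_comm t u] at h3) hu


def ProperP (R : Set (Fin n → ℂ)) (f : ℂ → Fin n → ℂ) : Prop :=
  ∀ ε > (0 : ℝ), ∃ r : ℝ, 0 ≤ r ∧ r < 1 ∧ ∀ z ∈ 𝔻, r < ‖z‖ → 1 - ε < mink R (f z)


/-- Transfer of weak extremality through the automorphism and the Möbius map. -/
lemma weakext_conj {m : ℕ} {f : ℂ → Fin n → ℂ} {lam : Fin m → ℂ}
    (hmem : ∀ j, lam j ∈ 𝔻) (hf : IsWeakExtremal R lam f) {Φ : (Fin n → ℂ) → Fin n → ℂ}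
    (hΦ : IsAutomorphismOf R Φ) {a : ℂ} (ha : ‖a‖ < 1) :
    IsWeakExtremal R (fun j => mob a (lam j)) (fun z => Φ (f (mob a z))) := by
  have hsub : 𝔻 ⊆ {z : ℂ | 1 - (starRingEnd ℂ) a * z ≠ 0} := by
    intro z hz
    exact mob_den_ne ha (le_of_lt (mem_ball_zero_iff.1 hz))
  have hmob_maps : MapsTo (mob a) 𝔻 𝔻 := by
    intro z hz
    exact mem_ball_zero_iff.2 (mob_norm_lt ha (mem_ball_zero_iff.1 hz))
  have h1 : DifferentiableOn ℂ (f ∘ mob a) 𝔻 :=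
    hf.1.comp ((mob_diffOn a).mono hsub) hmob_maps
  have hfm : MapsTo (f ∘ mob a) 𝔻 R := fun z hz => hf.2.1 _ (hmob_maps hz)
  refine ⟨hΦ.1.comp h1 hfm, fun z hz => hΦ.2.1 (hfm hz), ?_⟩
  rintro ⟨U, g, hUo, hUb, hgd, hgR, hgi⟩
  obtain ⟨Ψ, hΨd, hΨm, hinv1, _hinv2⟩ := hΦ.2.2
  set Ω : Set ℂ := {z : ℂ | 1 - (starRingEnd ℂ) a * z ≠ 0} with hΩ
  set U' : Set ℂ := Ω ∩ (mob a) ⁻¹' U with hU'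
  have hU'o : IsOpen U' :=
    ContinuousOn.isOpen_inter_preimage (mob_diffOn a).continuousOn (isOpen_mob_dom a) hUo
  have hU'b : Metric.closedBall (0 : ℂ) 1 ⊆ U' := by
    intro z hz
    have hz1 : ‖z‖ ≤ 1 := mem_closedBall_zero_iff.1 hz
    refine ⟨mob_den_ne ha hz1, ?_⟩
    exact hUb (mem_closedBall_zero_iff.2 (mob_norm_le ha hz1))
  have hmob' : MapsTo (mob a) U' U := fun z hz => hz.2
  have hg2 : DifferentiableOn ℂ (g ∘ mob a) U' :=
    hgd.comp ((mob_diffOn a).mono (inter_subset_left)) hmob'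
  have hgR' : MapsTo (g ∘ mob a) U' R := fun z hz => hgR _ (hmob' hz)
  apply hf.2.2
  refine ⟨U', fun z => Ψ (g (mob a z)), hU'o, hU'b, hΨd.comp hg2 hgR', ?_, ?_⟩
  · exact fun z hz => hΨm (hgR' hz)
  · intro j
    have hj : ‖lam j‖ < 1 := mem_ball_zero_iff.1 (hmem j)
    have hd := mob_den_ne ha hj.le
    have h2 : mob a (mob a (lam j)) = lam j := mob_invol ha hd
    calc Ψ (g (mob a (lam j))) = Ψ (Φ (f (mob a (mob a (lam j))))) := by rw [hgi j]
      _ = Ψ (Φ (f (lam j))) := by rw [h2]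
      _ = f (lam j) := hinv1 _ (hf.2.1 _ (hmem j))

/-- Case B: the dslope of a weak (m+1)-extremal vanishing at `0 = lam' 0` is a
weak m-extremal, provided it maps into `R`. -/
lemma caseB (hRo : IsOpen R) (hbal : Balanced ℂ R) {m : ℕ} {F : ℂ → Fin n → ℂ}
    {lam' : Fin (m + 1) → ℂ} (hlam'0 : lam' 0 = 0)
    (hF : IsWeakExtremal R lam' F) (hF0 : F 0 = 0)
    (hψR : ∀ z ∈ 𝔻, dslope F 0 z ∈ R) :
    IsWeakExtremal R (fun j : Fin m => lam' j.succ) (dslope F 0) := by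
  have hψd : DifferentiableOn ℂ (dslope F 0) 𝔻 :=
    (Complex.differentiableOn_dslope D_mem_nhds).2 hF.1
  refine ⟨hψd, hψR, ?_⟩
  rintro ⟨U, h, hUo, hUb, hhd, hhR, hhi⟩
  obtain ⟨δ₁, hδ₁, hthick⟩ :=
    (isCompact_closedBall (0:ℂ) 1).exists_thickening_subset_open hUo hUb
  have hball1 : Metric.ball (0:ℂ) (δ₁ + 1) ⊆ U := by
    rw [← thickening_closedBall hδ₁ zero_le_one]
    exact hthick
  set K₂ : Set ℂ := Metric.closedBall (0:ℂ) (1 + δ₁ / 2) with hK₂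
  have hK₂U : K₂ ⊆ U := by
    intro z hz
    apply hball1
    rw [mem_ball_zero_iff]
    rw [mem_closedBall_zero_iff] at hz
    linarith
  have himgc : IsCompact (h '' K₂) :=
    (isCompact_closedBall _ _).image_of_continuousOn (hhd.continuousOn.mono hK₂U)
  set K₀ : Set (Fin n → ℂ) :=
    (fun p : ℂ × (Fin n → ℂ) => p.1 • p.2) '' (Metric.closedBall (0:ℂ) 1 ×ˢ (h '' K₂))
    with hK₀
  have hK₀c : IsCompact K₀ :=
    ((isCompact_closedBall _ _).prod himgc).image continuous_smul
  have hK₀R : K₀ ⊆ R := by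
    rintro w ⟨⟨c, v⟩, ⟨hc, ⟨x, hx, rfl⟩⟩, rfl⟩
    exact hbal.smul_mem (mem_closedBall_zero_iff.1 hc) (hhR _ (hK₂U hx))
  obtain ⟨δ₃, hδ₃, hthick₃⟩ := hK₀c.exists_thickening_subset_open hRo hK₀R
  obtain ⟨M, hM⟩ := himgc.exists_bound_of_continuousOn continuousOn_id
  set M' : ℝ := max M 1 with hM'
  have hM'pos : 0 < M' := lt_of_lt_of_le one_pos (le_max_right _ _)
  set δ₄ : ℝ := min (δ₁ / 2) (δ₃ / (2 * M')) with hδ₄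
  have hδ₄pos : 0 < δ₄ := lt_min (by linarith) (by positivity)
  apply hF.2.2
  refine ⟨Metric.ball (0:ℂ) (1 + δ₄), fun z => z • h z, isOpen_ball, ?_, ?_, ?_, ?_⟩
  · intro z hz
    rw [mem_closedBall_zero_iff] at hz
    rw [mem_ball_zero_iff]
    linarith
  · apply DifferentiableOn.fun_smul differentiableOn_id
    apply hhd.mono
    intro z hz
    apply hball1
    rw [mem_ball_zero_iff] at hz ⊢
    have : δ₄ ≤ δ₁ / 2 := min_le_left _ _
    linarith
  · -- values in R
    intro z hz
    rw [mem_ball_zero_iff] at hz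
    have hzK₂ : z ∈ K₂ := by
      rw [hK₂, mem_closedBall_zero_iff]
      have : δ₄ ≤ δ₁ / 2 := min_le_left _ _
      linarith
    have hhz : h z ∈ h '' K₂ := mem_image_of_mem h hzK₂
    rcases le_or_gt ‖z‖ 1 with h1 | h1
    · apply hK₀R
      exact ⟨(z, h z), ⟨mem_closedBall_zero_iff.2 h1, hhz⟩, rfl⟩
    · -- 1 < ‖z‖ < 1 + δ₄
      have hz0 : z ≠ 0 := by
        intro hzz; rw [hzz] at h1; simp at h1; linarith
      set c : ℂ := z / (‖z‖ : ℂ) with hc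
      have hnc : ‖c‖ = 1 := by
        rw [hc, norm_div, Complex.norm_real, Real.norm_eq_abs,
          _root_.abs_of_nonneg (norm_nonneg _), div_self (norm_ne_zero_iff.2 hz0)]
      have hcK₀ : c • h z ∈ K₀ := ⟨(c, h z), ⟨mem_closedBall_zero_iff.2 hnc.le, hhz⟩, rfl⟩
      apply hthick₃
      rw [Metric.mem_thickening_iff]
      refine ⟨c • h z, hcK₀, ?_⟩
      rw [dist_eq_norm, ← sub_smul, norm_smul]
      have hzc : ‖z - c‖ = ‖z‖ - 1 := by
        have : z - c = (1 - (‖z‖ : ℂ)⁻¹) * z := by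
          rw [hc]
          field_simp
        rw [this, norm_mul]
        have hnz : (0:ℝ) < ‖z‖ := by linarith
        have h2 : ‖(1 : ℂ) - ((‖z‖ : ℝ) : ℂ)⁻¹‖ = 1 - ‖z‖⁻¹ := by
          rw [show ((1:ℂ) - ((‖z‖:ℝ):ℂ)⁻¹) = (((1 - ‖z‖⁻¹ : ℝ)) : ℂ) by push_cast; ring]
          rw [Complex.norm_real, Real.norm_eq_abs, _root_.abs_of_nonneg]
          have : ‖z‖⁻¹ < 1 := by
            rw [inv_lt_one_iff₀]; right; exact h1
          linarith
        rw [h2, sub_mul, one_mul, inv_mul_cancel₀ (ne_of_gt hnz)]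
      have hhzM : ‖h z‖ ≤ M' := le_trans (by simpa using hM _ hhz) (le_max_left _ _)
      calc ‖z - c‖ * ‖h z‖ ≤ (‖z‖ - 1) * M' := by
            rw [hzc]
            apply mul_le_mul le_rfl hhzM (norm_nonneg _) (by linarith)
        _ < δ₄ * M' := by
            apply mul_lt_mul_of_pos_right _ hM'pos
            linarith
        _ ≤ δ₃ / (2 * M') * M' := by
            apply mul_le_mul_of_nonneg_right (min_le_right _ _) hM'pos.le
        _ < δ₃ := by
            rw [div_mul_eq_mul_div, mul_comm 2 M', ← div_div]
            rw [mul_div_assoc, div_self (ne_of_gt hM'pos)]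
            linarith
  · -- interpolation
    intro j
    refine Fin.cases ?_ ?_ j
    · show lam' 0 • h (lam' 0) = F (lam' 0)
      rw [hlam'0, hF0, zero_smul]
    · intro i
      show lam' i.succ • h (lam' i.succ) = F (lam' i.succ)
      have h5 : h (lam' i.succ) = dslope F 0 (lam' i.succ) := hhi i
      rw [h5, smul_dslope_eq hF0]

/-- Properness transfers through precomposition with the Möbius involution. -/
lemma properP_comp_mob {a : ℂ} (ha : ‖a‖ < 1) {F g : ℂ → Fin n → ℂ}
    (hP : ProperP R F) (hg : ∀ z ∈ 𝔻, g z = F (mob a z)) : ProperP R g := by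
  intro ε hε
  obtain ⟨r, hr0, hr1, hr⟩ := hP ε hε
  set C : ℝ := (1 - Complex.normSq a) / (1 - ‖a‖) ^ 2 with hC
  have haa : Complex.normSq a < 1 := normSq_lt_one_iff.2 ha
  have ha2 : (0:ℝ) < (1 - ‖a‖)^2 := by nlinarith [norm_nonneg a]
  have hC1 : 1 ≤ C := by
    rw [hC, le_div_iff₀ ha2]
    have : Complex.normSq a = ‖a‖ ^ 2 := by
      rw [← Complex.sq_norm]
    nlinarith [norm_nonneg a]
  have hCpos : 0 < C := lt_of_lt_of_le one_pos hC1
  set r₂ : ℝ := Real.sqrt (1 - (1 - r^2) / C) with hr₂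
  have harg0 : 0 ≤ 1 - (1 - r^2) / C := by
    have h1 : (1 - r^2) / C ≤ 1 - r^2 := by
      apply div_le_self (by nlinarith) hC1
    nlinarith [hr0]
  have hargr : 1 - (1 - r^2)/C < 1 := by
    have : 0 < (1 - r^2)/C := div_pos (by nlinarith) hCpos
    linarith
  have hr₂sq : r₂ ^ 2 = 1 - (1 - r^2)/C := Real.sq_sqrt harg0
  have hr₂0 : 0 ≤ r₂ := Real.sqrt_nonneg _
  have hr₂1 : r₂ < 1 := by nlinarith [hr₂sq, hr₂0]
  refine ⟨r₂, hr₂0, hr₂1, ?_⟩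
  intro z hz hzr
  have hz1 : ‖z‖ < 1 := mem_ball_zero_iff.1 hz
  have hmz : mob a z ∈ 𝔻 := mem_ball_zero_iff.2 (mob_norm_lt ha hz1)
  rw [hg z hz]
  apply hr _ hmz
  -- show r < ‖mob a z‖
  by_contra hcon
  push_neg at hcon
  have hml := mob_normSq_lower ha hz1.le
  have h1 : Complex.normSq (mob a z) ≤ r ^ 2 := by
    have : Complex.normSq (mob a z) = ‖mob a z‖ ^ 2 := by
      rw [← Complex.sq_norm]
    rw [this]
    nlinarith [norm_nonneg (mob a z)]
  have h2 : r₂ ^ 2 < Complex.normSq z := by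
    have : Complex.normSq z = ‖z‖ ^ 2 := by rw [← Complex.sq_norm]
    rw [this]
    nlinarith
  have h3 : 1 - Complex.normSq z < (1 - r^2)/C := by
    rw [hr₂sq] at h2; linarith
  have h4 : C * (1 - Complex.normSq z) < 1 - r^2 := by
    rw [← lt_div_iff₀' hCpos]
    exact h3
  nlinarith [hml]

/-- Properness transfers back through the automorphism. -/
lemma properP_of_comp_auto (hRo : IsOpen R) (hbd : Bornology.IsBounded R)
    (hconv : Convex ℝ R) (hbal : Balanced ℂ R) (h0 : (0 : Fin n → ℂ) ∈ R)
    {f : ℂ → Fin n → ℂ} {Φ : (Fin n → ℂ) → Fin n → ℂ} (hΦ : IsAutomorphismOf R Φ)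
    (hfm : ∀ z ∈ 𝔻, f z ∈ R) (hP : ProperP R (fun z => Φ (f z))) : ProperP R f := by
  by_contra hcon
  simp only [ProperP, not_forall] at hcon
  obtain ⟨ε, hε, hno⟩ := hcon
  push_neg at hno
  have hε' : 0 < ε := hε
  have hseq : ∀ r : ℝ, 0 ≤ r → r < 1 → ∃ z ∈ 𝔻, r < ‖z‖ ∧ mink R (f z) ≤ 1 - ε := by
    intro r h1 h2
    obtain ⟨z, hz, hz2⟩ := hno r h1 h2
    exact ⟨z, hz, by tauto⟩
  rcases lt_or_ge 1 ε with hεbig | hεle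
  · obtain ⟨z, hz, _, hm⟩ := hseq (1/2) (by norm_num) (by norm_num)
    have := mink_nonneg' hRo h0 (f z)
    linarith
  -- ε ≤ 1
  set s : ℝ := 1 - ε / 2 with hs
  have hs1 : s < 1 := by simp only [hs]; linarith
  have hs0 : 0 < s := by simp only [hs]; linarith
  choose z hzD hzn hzm using fun k : ℕ =>
    hseq (1 - 1/(k+1)) (by
      have : (1:ℝ)/(k+1) ≤ 1 := by
        rw [div_le_one (by positivity)]
        simp
      linarith) (by
      have : (0:ℝ) < 1/(k+1) := by positivity
      linarith)
  have hzs : ∀ k : ℕ, mink R (f (z k)) < s := by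
    intro k
    calc mink R (f (z k)) ≤ 1 - ε := hzm k
      _ < s := by simp only [hs]; linarith
  choose t ht0 htm hts using fun k => mink_lt_extract hRo h0 (hzs k)
  set x : ℕ → ℝ × (Fin n → ℂ) := fun k => (t k, ((t k : ℝ) : ℂ)⁻¹ • f (z k)) with hx
  have hSb : Bornology.IsBounded ((Set.Icc (0:ℝ) s) ×ˢ R) :=
    (Metric.isBounded_Icc 0 s).prod hbd
  have hxmem : ∀ k, x k ∈ (Set.Icc (0:ℝ) s) ×ˢ R := by
    intro k
    exact ⟨⟨(ht0 k).le, (hts k).le⟩, htm k⟩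
  obtain ⟨p, hpcl, φ, hφmono, hφtend⟩ := tendsto_subseq_of_bounded hSb hxmem
  rw [closure_prod_eq] at hpcl
  obtain ⟨hp1, hp2⟩ := hpcl
  rw [isClosed_Icc.closure_eq] at hp1
  have ht_tend : Filter.Tendsto (fun k => t (φ k)) Filter.atTop (𝓝 p.1) :=
    (continuous_fst.tendsto p).comp hφtend
  have hv_tend : Filter.Tendsto (fun k => ((t (φ k) : ℝ) : ℂ)⁻¹ • f (z (φ k)))
      Filter.atTop (𝓝 p.2) :=
    (continuous_snd.tendsto p).comp hφtend
  set winf : Fin n → ℂ := ((p.1 : ℝ) : ℂ) • p.2 with hwinf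
  have hwinfR : winf ∈ R :=
    smul_closure_mem hRo hconv hbal h0 hp2 hp1.1 (lt_of_le_of_lt hp1.2 hs1)
  have hf_tend : Filter.Tendsto (fun k => f (z (φ k))) Filter.atTop (𝓝 winf) := by
    have heq : ∀ k, f (z (φ k)) = ((t (φ k) : ℝ) : ℂ) • (((t (φ k) : ℝ) : ℂ)⁻¹ • f (z (φ k))) := by
      intro k
      rw [smul_inv_smul₀]
      simp only [ne_eq, Complex.ofReal_eq_zero]
      exact ne_of_gt (ht0 (φ k))
    simp only [funext heq]
    apply Filter.Tendsto.smul _ hv_tend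
    exact (Complex.continuous_ofReal.tendsto p.1).comp ht_tend
  have hΦcont : ContinuousAt Φ winf :=
    (hΦ.1.continuousOn.continuousAt (hRo.mem_nhds hwinfR))
  have hΦtend : Filter.Tendsto (fun k => Φ (f (z (φ k)))) Filter.atTop (𝓝 (Φ winf)) :=
    hΦcont.tendsto.comp hf_tend
  have hΦwinfR : Φ winf ∈ R := hΦ.2.1 hwinfR
  obtain ⟨t₀, δ, ht₀1, ht₀0, hδ0, hunif⟩ := mink_le_uniform hRo hΦwinfR
  have hev : ∃ N : ℕ, ∀ k ≥ N, ‖Φ (f (z (φ k))) - Φ winf‖ < δ := by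
    have := (Metric.tendsto_atTop.1 hΦtend) δ hδ0
    obtain ⟨N, hN⟩ := this
    exact ⟨N, fun k hk => by
      have := hN k hk
      rwa [dist_eq_norm] at this⟩
  obtain ⟨N, hN⟩ := hev
  obtain ⟨r', hr'0, hr'1, hr'⟩ := hP (1 - t₀) (by linarith)
  obtain ⟨K, hK⟩ := exists_nat_one_div_lt (show (0:ℝ) < 1 - r' by linarith)
  set k := max N K with hk
  have hφk : φ k ≥ k := hφmono.le_apply
  have hk1 : 1 - 1/((φ k : ℝ)+1) ≥ 1 - 1/((K : ℝ)+1) := by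
    have h1 : ((K:ℝ)+1) ≤ ((φ k : ℝ)+1) := by
      have : (K:ℝ) ≤ (φ k : ℝ) := by
        exact_mod_cast le_trans (le_max_right N K) hφk
      linarith
    have := one_div_le_one_div_of_le (by positivity : (0:ℝ) < (K:ℝ)+1) h1
    linarith
  have hzr' : r' < ‖z (φ k)‖ := by
    have h2 : 1 - 1/((K:ℝ)+1) > r' := by linarith [hK]
    calc r' < 1 - 1/((K:ℝ)+1) := h2
      _ ≤ 1 - 1/((φ k : ℝ)+1) := hk1
      _ < ‖z (φ k)‖ := hzn (φ k)
  have hlow := hr' _ (hzD (φ k)) hzr'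
  have hup : mink R (Φ (f (z (φ k)))) ≤ t₀ := hunif _ (hN k (le_max_left N K))
  simp only at hlow
  linarith


lemma mob_zero_right (a : ℂ) : mob a 0 = a := by simp [mob]

theorem main_induction (hRo : IsOpen R) (hRc : IsConnected R) (hbd : Bornology.IsBounded R)
    (hconv : Convex ℝ R) (hbal : Balanced ℂ R) (hhom : Homogeneous R) :
    ∀ (m : ℕ) (f : ℂ → Fin n → ℂ) (lam : Fin m → ℂ), Function.Injective lam →
      (∀ j, lam j ∈ 𝔻) → IsWeakExtremal R lam f → ProperP R f := by
  have h0 : (0 : Fin n → ℂ) ∈ R := zero_mem_of_bal hbal hRc.nonempty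
  intro m
  induction m with
  | zero =>
    intro f lam _ _ hf
    exact (hf.2.2 ⟨univ, fun _ => 0, isOpen_univ, subset_univ _,
      differentiableOn_const _, fun z _ => h0, fun j => j.elim0⟩).elim
  | succ k IH =>
    intro f lam hinj hmem hf
    set a : ℂ := lam 0 with hadef
    have ha : ‖a‖ < 1 := mem_ball_zero_iff.1 (hmem 0)
    obtain ⟨Φ, hΦ, hΦf⟩ := hhom (f a) (hf.2.1 a (hmem 0)) 0 h0
    set F : ℂ → Fin n → ℂ := fun z => Φ (f (mob a z)) with hFdef
    set lam' : Fin (k + 1) → ℂ := fun j => mob a (lam j) with hlam'def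
    have hF : IsWeakExtremal R lam' F := weakext_conj hmem hf hΦ ha
    have hlam'0 : lam' 0 = 0 := by
      simp only [hlam'def, ← hadef, mob_self]
    have hF0 : F 0 = 0 := by
      simp only [hFdef, mob_zero_right, ← hadef, hΦf]
    have hmem' : ∀ j, lam' j ∈ 𝔻 := fun j =>
      mem_ball_zero_iff.2 (mob_norm_lt ha (mem_ball_zero_iff.1 (hmem j)))
    have hinj' : Function.Injective lam' := by
      intro i j hij
      apply hinj
      simp only [hlam'def] at hij
      have hi := mob_invol ha (mob_den_ne ha (le_of_lt (mem_ball_zero_iff.1 (hmem i))))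
      have hj := mob_invol ha (mob_den_ne ha (le_of_lt (mem_ball_zero_iff.1 (hmem j))))
      rw [← hi, ← hj, hij]
    have hPF : ProperP R F := by
      by_cases hA : ∃ z₀ ∈ 𝔻, dslope F 0 z₀ ∉ R
      · obtain ⟨z₀, hz₀, hb⟩ := hA
        have hbound := caseA_bound hRo hconv hbal h0 hF.1 hF.2.1 hF0 hz₀ hb
        intro ε hε
        refine ⟨max 0 (1 - ε), le_max_left _ _, max_lt one_pos (by linarith), ?_⟩
        intro z hz hrz
        have h1 : 1 - ε < ‖z‖ := lt_of_le_of_lt (le_max_right 0 (1 - ε)) hrz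
        exact lt_of_lt_of_le h1 (hbound z hz)
      · push_neg at hA
        have hψ : IsWeakExtremal R (fun j : Fin k => lam' j.succ) (dslope F 0) :=
          caseB hRo hbal hlam'0 hF hF0 hA
        have hinj'' : Function.Injective (fun j : Fin k => lam' j.succ) := by
          intro i j hij
          exact Fin.succ_injective _ (hinj' hij)
        have hPψ := IH (dslope F 0) _ hinj'' (fun j => hmem' j.succ) hψ
        intro ε hε
        set ε' : ℝ := min ε 1 with hε'def
        have hε'0 : 0 < ε' := lt_min hε one_pos
        have hε'1 : ε' ≤ 1 := min_le_right _ _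
        obtain ⟨r₁, hr₁0, hr₁1, hr₁⟩ := hPψ (ε' / 2) (by linarith)
        refine ⟨max r₁ (1 - ε' / 2), le_trans hr₁0 (le_max_left _ _),
          max_lt hr₁1 (by linarith), ?_⟩
        intro z hz hrz
        have hz1 : r₁ < ‖z‖ := lt_of_le_of_lt (le_max_left _ _) hrz
        have hz2 : 1 - ε' / 2 < ‖z‖ := lt_of_le_of_lt (le_max_right _ _) hrz
        have hm := hr₁ z hz hz1
        have hsl := mink_smul_lower hRo hbal h0 z (dslope F 0 z)
        rw [smul_dslope_eq hF0 z] at hsl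
        have hpos : (0:ℝ) < 1 - ε' / 2 := by linarith
        have : (1 - ε' / 2) * (1 - ε' / 2) < ‖z‖ * mink R (dslope F 0 z) := by
          apply mul_lt_mul'' hz2 hm hpos.le hpos.le
        have h2 : 1 - ε ≤ (1 - ε' / 2) * (1 - ε' / 2) := by
          have : ε' ≤ ε := min_le_left _ _
          nlinarith
        linarith
    -- transfer back
    have hPΦf : ProperP R (fun z => Φ (f z)) := by
      apply properP_comp_mob ha hPF
      intro z hz
      have hinvol := mob_invol ha (mob_den_ne ha (le_of_lt (mem_ball_zero_iff.1 hz)))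
      simp only [hFdef, hinvol]
    exact properP_of_comp_auto hRo hbd hconv hbal h0 hΦ hf.2.1 hPΦf


end AuxProofs

theorem stmt5 {n : ℕ} (R : Set (Fin n → ℂ)) (hRo : IsOpen R) (hRc : IsConnected R)
    (hbd : Bornology.IsBounded R) (hconv : Convex ℝ R) (hbal : Balanced ℂ R)
    (hhom : Homogeneous R)
    (m : ℕ) (hm : 2 ≤ m) (f : ℂ → Fin n → ℂ)
    (lam : Fin m → ℂ) (hinj : Function.Injective lam) (hmem : ∀ j, lam j ∈ 𝔻)
    (hf : IsWeakExtremal R lam f) :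
    ∀ ε > (0 : ℝ), ∃ r : ℝ, 0 ≤ r ∧ r < 1 ∧ ∀ z ∈ 𝔻, r < ‖z‖ → 1 - ε < mink R (f z) := by
  intro ε hε
  exact main_induction hRo hRc hbd hconv hbal hhom m f lam hinj hmem hf ε hε

end
end
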